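/- arXiv:2307.02345 — 6 statements merged into one kernel-verified Lean document; each statement's English description precedes it below -/
import Mathlib

section
/- Let S be a type (the state space), n ≥ 1, and let the action space be A = {1, …, n}. Let T : S × A → S be an injective transition map, r : S × A → ℝ a reward function, and γ ∈ (0,1) a discount factor. Let Q* : S × A → ℝ satisfy the optimal Bellman equation Q*(s,a) = r(s,a) + γ·max_{a'} Q*(T(s,a), a') for all (s,a). Let (Ω, μ) be a probability space and let (Q̂⁰(s,a))_{(s,a)∈S×A} be a family of mutually independent random variables, each Gumbel distributed with the same location λ ∈ ℝ and scale η > 0 (i.e. with CDF x ↦ exp(−exp(−(x−λ)/η))). Define recursively Q̂^{t+1}(s,a)(ω) = r(s,a) + γ·max_{a'} Q̂^{t}(T(s,a), a')(ω), and set ε^{t}(s,a) = Q̂^{t}(s,a) − Q*(s,a). Define β₁ = γ·η and β_t = γ^{t−1}·β₁ for t ≥ 1; define C₁(s,a) = γ·(λ + η·ln n) (a constant independent of (s,a)), and for t ≥ 2 define C_t(s,a) = γ·β_{t−1}·ln(∑_{i=1}^n exp((r(s',aᵢ) + C_{t−1}(s',aᵢ))/β_{t−1})) where s' = T(s,a).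 Then for every t ≥ 1 and every pair (s,a), the random variable ε^{t}(s,a) is Gumbel distributed with location C_t(s,a) − γ·max_{a'} Q*(T(s,a),a') and scale β_t, i.e. for all x ∈ ℝ, μ{ω : ε^{t}(s,a)(ω) ≤ x} = exp(−exp(−(x − C_t(s,a) + γ·max_{a'} Q*(T(s,a),a'))/β_t)). -/
open MeasureTheory Real ProbabilityTheory

/-- Location parameter of `max_a Q̂^t(s,a)` (a Gumbel r.v. with scale `γ^t·η`). -/
noncomputable def gumLam {S : Type*} {n : ℕ} (T : S × Fin n → S) (r : S × Fin n → ℝ)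
    (γ lam η : ℝ) : ℕ → S → ℝ
  | 0, _ => lam + η * Real.log n
  | (t+1), s => γ ^ (t+1) * η *
      Real.log (∑ a : Fin n,
        Real.exp ((r (s, a) + γ * gumLam T r γ lam η t (T (s, a))) / (γ ^ (t+1) * η)))

lemma gum_exp_aux {c : ℝ} (hc : c ≠ 0) {A : ℝ} (hA : 0 < A) (y : ℝ) :
    Real.exp (-(y - c * Real.log A) / c) = A * Real.exp (-y / c) := by
  rw [show -(y - c * Real.log A) / c = -y / c + Real.log A by field_simp; ring,
    Real.exp_add, Real.exp_log hA]
  ring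

/-- Lemma 4 (distribution of the iteration error): under Gumbel initialization,
the error `ε^t(s,a) = Q̂^t(s,a) − Q*(s,a)` of the `t`-th Bellman iterate is
Gumbel distributed with location `C t (s,a) − γ · max_{a'} Q*(T(s,a), a')` and
scale `β t = γ^(t-1) · (γ·η)`. -/
theorem bellman_iterate_error_gumbel
    {S : Type*} {n : ℕ} (hn : 1 ≤ n)
    (hne : (Finset.univ : Finset (Fin n)).Nonempty)
    (T : S × Fin n → S) (hT : Function.Injective T)
    (r : S × Fin n → ℝ) (γ : ℝ) (hγ : γ ∈ Set.Ioo (0:ℝ) 1)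
    (Qstar : S × Fin n → ℝ)
    (hQstar : ∀ p : S × Fin n,
      Qstar p = r p + γ * (Finset.univ.sup' hne fun a' => Qstar (T p, a')))
    {Ω : Type*} [MeasurableSpace Ω] (μ : Measure Ω) [IsProbabilityMeasure μ]
    (Qhat : ℕ → S × Fin n → Ω → ℝ)
    -- the initial values form a mutually independent family
    (hindep : iIndepFun (fun p : S × Fin n => Qhat 0 p) μ)
    -- each initial value is Gumbel with location `lam` and scale `η`
    (lam η : ℝ) (hη : 0 < η)
    (hinit : ∀ p : S × Fin n, ∀ x : ℝ,
      μ {ω | Qhat 0 p ω ≤ x} = ENNReal.ofReal (exp (-exp (-(x - lam) / η))))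
    -- the Bellman iteration
    (hiter : ∀ t : ℕ, ∀ p : S × Fin n, ∀ ω : Ω,
      Qhat (t + 1) p ω
        = r p + γ * (Finset.univ.sup' hne fun a' => Qhat t (T p, a') ω))
    -- the scale parameters `β t = γ^(t-1) · β₁` with `β₁ = γ·η`
    (β : ℕ → ℝ) (hβ : ∀ t : ℕ, 1 ≤ t → β t = γ ^ (t - 1) * (γ * η))
    -- the location parameters `C t`
    (C : ℕ → S × Fin n → ℝ)
    (hC1 : ∀ p : S × Fin n, C 1 p = γ * (lam + η * Real.log n))
    (hCt : ∀ t : ℕ, 2 ≤ t → ∀ p : S × Fin n,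
      C t p = γ * (β (t - 1) *
        Real.log (∑ i : Fin n,
          exp ((r (T p, i) + C (t - 1) (T p, i)) / β (t - 1))))) :
    ∀ t : ℕ, 1 ≤ t → ∀ p : S × Fin n, ∀ x : ℝ,
      μ {ω | Qhat t p ω - Qstar p ≤ x}
        = ENNReal.ofReal (exp (-exp (-(x -
            (C t p - γ * (Finset.univ.sup' hne fun a' => Qstar (T p, a'))))
              / β t))) := by
  classical
  obtain ⟨hγ0, hγ1⟩ := hγ
  have hγne : γ ≠ 0 := ne_of_gt hγ0
  have hηne : η ≠ 0 := ne_of_gt hη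
  have hcpos : ∀ t : ℕ, 0 < γ ^ t * η := fun t => mul_pos (pow_pos hγ0 t) hη
  set L := gumLam T r γ lam η with hLdef
  -- Step 1: independence of the initial family, in CDF form
  have hA : ∀ (F : Finset (S × Fin n)) (g : S × Fin n → ℝ),
      μ {ω | ∀ p ∈ F, Qhat 0 p ω ≤ g p} = ∏ p ∈ F, μ {ω | Qhat 0 p ω ≤ g p} := by
    intro F g
    have h := hindep.measure_inter_preimage_eq_mul F
      (sets := fun p => Set.Iic (g p)) (fun i _ => measurableSet_Iic)
    have hset : (⋂ p ∈ F, (Qhat 0 p) ⁻¹' Set.Iic (g p))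
        = {ω | ∀ p ∈ F, Qhat 0 p ω ≤ g p} := by
      ext ω; simp [Set.mem_iInter, Set.mem_setOf_eq]
    rw [hset] at h
    exact h
  -- Step 2: joint CDF of the max-variables, by induction on t
  have key : ∀ t : ℕ, ∀ (F : Finset S) (g : S → ℝ),
      μ {ω | ∀ s ∈ F, (Finset.univ.sup' hne fun a => Qhat t (s, a) ω) ≤ g s}
        = ∏ s ∈ F, ENNReal.ofReal (exp (-exp (-(g s - L t s) / (γ ^ t * η)))) := by
    intro t
    induction t with
    | zero =>
      intro F g
      have hev : {ω | ∀ s ∈ F, (Finset.univ.sup' hne fun a => Qhat 0 (s, a) ω) ≤ g s}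
          = {ω | ∀ p ∈ F ×ˢ (Finset.univ : Finset (Fin n)), Qhat 0 p ω ≤ (fun p => g p.1) p} := by
        ext ω
        simp only [Set.mem_setOf_eq, Finset.mem_product, Finset.mem_univ, and_true]
        constructor
        · rintro h ⟨s, a⟩ hs
          exact (Finset.sup'_le_iff hne _).1 (h s hs) a (Finset.mem_univ a)
        · intro h s hs
          exact (Finset.sup'_le_iff hne _).2 fun a _ => h (s, a) hs
      rw [hev, hA, Finset.prod_product]
      refine Finset.prod_congr rfl fun s _ => ?_
      have : ∀ a : Fin n, μ {ω | Qhat 0 (s, a) ω ≤ g s}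
          = ENNReal.ofReal (exp (-exp (-(g s - lam) / η))) := fun a => hinit (s, a) (g s)
      rw [Finset.prod_congr rfl fun a _ => this a, Finset.prod_const, Finset.card_univ,
        Fintype.card_fin, ← ENNReal.ofReal_pow (Real.exp_nonneg _), ← Real.exp_nat_mul]
      congr 2
      have hnpos : (0:ℝ) < (n:ℝ) := by exact_mod_cast Nat.lt_of_lt_of_le Nat.zero_lt_one hn
      have hL0 : L 0 s = lam + η * Real.log n := rfl
      rw [pow_zero, one_mul, hL0,
        show -(g s - (lam + η * Real.log n)) / η = -((g s - lam) - η * Real.log n) / η by ring_nf,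
        show -((g s - lam) - η * Real.log n) = -((g s - lam) - η * Real.log n) from rfl,
        gum_exp_aux hηne hnpos (g s - lam)]
      ring
    | succ t ih =>
      intro F g
      -- rewrite the event in terms of the max-variables at time t
      have hev : {ω | ∀ s ∈ F, (Finset.univ.sup' hne fun a => Qhat (t+1) (s, a) ω) ≤ g s}
          = {ω | ∀ s' ∈ Finset.image T (F ×ˢ (Finset.univ : Finset (Fin n))),
              (Finset.univ.sup' hne fun a => Qhat t (s', a) ω)
                ≤ Function.extend T (fun j => (g j.1 - r j) / γ) 0 s'} := by
        ext ω
        simp only [Set.mem_setOf_eq, Finset.mem_image, Finset.mem_product, Finset.mem_univ,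
          and_true]
        constructor
        · rintro h s' ⟨⟨s, a⟩, hs, rfl⟩
          have h1 := (Finset.sup'_le_iff hne _).1 (h s hs) a (Finset.mem_univ a)
          rw [hiter t (s, a) ω] at h1
          rw [hT.extend_apply, le_div_iff₀ hγ0, mul_comm]
          linarith
        · intro h s hs
          refine (Finset.sup'_le_iff hne _).2 fun a _ => ?_
          rw [hiter t (s, a) ω]
          have h1 := h (T (s, a)) ⟨(s, a), hs, rfl⟩
          rw [hT.extend_apply, le_div_iff₀ hγ0, mul_comm] at h1
          linarith
      rw [hev, ih]
      rw [Finset.prod_image (fun j _ j' _ h => hT h), Finset.prod_product]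
      refine Finset.prod_congr rfl fun s _ => ?_
      -- now compute the product over actions for a fixed state s
      have hfac : ∀ a : Fin n,
          ENNReal.ofReal (exp (-exp (-(Function.extend T (fun j => (g j.1 - r j) / γ) 0 (T (s, a))
              - L t (T (s, a))) / (γ ^ t * η))))
          = ENNReal.ofReal (exp (-exp
              (-(g s - (r (s, a) + γ * L t (T (s, a)))) / (γ ^ (t+1) * η)))) := by
        intro a
        rw [hT.extend_apply]
        congr 3
        rw [pow_succ]
        field_simp
        ring
      rw [Finset.prod_congr rfl fun a _ => hfac a,
        ← ENNReal.ofReal_prod_of_nonneg (fun a _ => Real.exp_nonneg _), ← Real.exp_sum]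
      congr 2
      have hsum : ∑ a : Fin n, -exp (-(g s - (r (s, a) + γ * L t (T (s, a)))) / (γ ^ (t+1) * η))
          = -(∑ a : Fin n, exp ((r (s, a) + γ * L t (T (s, a))) / (γ ^ (t+1) * η)))
              * exp (-(g s) / (γ ^ (t+1) * η)) := by
        rw [neg_mul, Finset.sum_mul, ← Finset.sum_neg_distrib]
        refine Finset.sum_congr rfl fun a _ => ?_
        rw [neg_inj, ← Real.exp_add]
        congr 1
        field_simp
        ring
      rw [hsum]
      have hApos : 0 < ∑ a : Fin n, exp ((r (s, a) + γ * L t (T (s, a))) / (γ ^ (t+1) * η)) :=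
        Finset.sum_pos (fun a _ => Real.exp_pos _) hne
      have hL1 : L (t+1) s = γ ^ (t+1) * η *
          Real.log (∑ a : Fin n, exp ((r (s, a) + γ * L t (T (s, a))) / (γ ^ (t+1) * η))) := rfl
      rw [hL1, gum_exp_aux (ne_of_gt (hcpos (t+1))) hApos (g s)]
      ring
  -- Step 3: relation between C and the location parameters L
  have hCL : ∀ k : ℕ, ∀ p : S × Fin n, C (k + 1) p = γ * L k (T p) := by
    intro k
    induction k with
    | zero => intro p; rw [hC1 p]; rfl
    | succ k ih =>
      intro p
      have h2 : 2 ≤ k + 2 := by omega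
      rw [hCt (k + 2) h2 p]
      have hβk : β (k + 2 - 1) = γ ^ (k + 1) * η := by
        rw [show k + 2 - 1 = k + 1 by omega, hβ (k+1) (by omega),
          show k + 1 - 1 = k by omega, pow_succ]
        ring
      have hLs : L (k+1) (T p) = γ ^ (k+1) * η *
          Real.log (∑ a : Fin n,
            exp ((r (T p, a) + γ * L k (T (T p, a))) / (γ ^ (k+1) * η))) := rfl
      rw [hLs, hβk]
      congr 2
      rw [show k + 2 - 1 = k + 1 by omega]
      congr 1
      refine Finset.sum_congr rfl fun a _ => ?_
      rw [ih (T p, a)]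
  -- Step 4: conclude
  intro t ht p x
  obtain ⟨k, rfl⟩ : ∃ k, t = k + 1 := ⟨t - 1, by omega⟩
  set Mstar : ℝ := Finset.univ.sup' hne fun a' => Qstar (T p, a') with hMstar
  have hev : {ω | Qhat (k+1) p ω - Qstar p ≤ x}
      = {ω | ∀ s ∈ ({T p} : Finset S),
          (Finset.univ.sup' hne fun a => Qhat k (s, a) ω) ≤ (x + γ * Mstar) / γ} := by
    ext ω
    simp only [Set.mem_setOf_eq, Finset.mem_singleton, forall_eq]
    rw [hiter k p ω, hQstar p]
    rw [le_div_iff₀ hγ0]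
    constructor <;> intro h <;> nlinarith
  rw [hev, key k {T p} (fun _ => (x + γ * Mstar) / γ), Finset.prod_singleton]
  congr 2
  rw [hβ (k+1) (by omega), show k + 1 - 1 = k by omega, hCL k p]
  have : γ ^ k * (γ * η) ≠ 0 := by positivity
  field_simp
  ring
end

section
/- Let A > 0 and let X be a random variable with the Gumbel(A,1) density x ↦ exp(−((x−A) + exp(−(x−A)))) on ℝ. Then the expectation E[X·e^{−X}] = ∫_ℝ x·e^{−x}·exp(−((x−A) + exp(−(x−A)))) dx satisfies E[X·e^{−X}] < (3/20 + A·(20/e² + 10·exp(−e^{1/2}) + 1/2 − 1/(2e)))·e^{−A}. -/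
open MeasureTheory Real Set Filter
open scoped Topology

namespace GumbelAux

noncomputable def E (y : ℝ) : ℝ := exp (-(2*y) - exp (-y))

lemma E_eq' (y : ℝ) : E y = exp (-(2*y)) * exp (-(exp (-y))) := by
  rw [E, sub_eq_add_neg, exp_add]

lemma E_eq (y : ℝ) : E y = exp (-y) * exp (-y) * exp (-(exp (-y))) := by
  rw [E_eq', show -(2*y) = -y + -y by ring, exp_add]

lemma E_pos (y : ℝ) : 0 < E y := by rw [E]; exact exp_pos _

lemma contE : Continuous E := by unfold E; continuity

lemma tendsto_lin (b c d : ℝ) (hb : 0 < b) :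
    Tendsto (fun y : ℝ => (c * y + d) * exp (-(b * y))) atTop (𝓝 0) := by
  have h1 : Tendsto (fun t : ℝ => t * exp (-t)) atTop (𝓝 0) := by
    simpa using tendsto_pow_mul_exp_neg_atTop_nhds_zero 1
  have hb' : Tendsto (fun y : ℝ => b * y) atTop atTop :=
    Tendsto.const_mul_atTop hb tendsto_id
  have h2 : Tendsto (fun y : ℝ => (b * y) * exp (-(b * y))) atTop (𝓝 0) := h1.comp hb'
  have h3 : Tendsto (fun y : ℝ => exp (-(b * y))) atTop (𝓝 0) :=
    tendsto_exp_atBot.comp (tendsto_neg_atBot_iff.mpr hb')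
  have h4 := (h2.const_mul (c/b)).add (h3.const_mul d)
  norm_num at h4
  refine h4.congr (fun y => ?_)
  field_simp

lemma hasDeriv_G (b : ℝ) (hb : b ≠ 0) (y : ℝ) :
    HasDerivAt (fun y : ℝ => -((y/b + 1/b^2) * exp (-(b*y)))) (y * exp (-(b*y))) y := by
  have h1 : HasDerivAt (fun y : ℝ => y/b + 1/b^2) (1/b) y :=
    ((hasDerivAt_id y).div_const b).add_const _
  have h2 : HasDerivAt (fun y : ℝ => -(b*y)) (-b) y := by
    have h := ((hasDerivAt_id y).const_mul b).neg; rw [mul_one] at h; exact h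
  have h4 := (h1.mul h2.exp).neg
  refine h4.congr_deriv ?_
  field_simp
  ring

lemma tendsto_G (b : ℝ) (hb : 0 < b) :
    Tendsto (fun y : ℝ => -((y/b + 1/b^2) * exp (-(b*y)))) atTop (𝓝 0) :=
  (tendsto_lin b (-(1/b)) (-(1/b^2)) hb).congr (fun y => by ring)

lemma integrableOn_id_mul_exp (b : ℝ) (hb : 0 < b) :
    IntegrableOn (fun y : ℝ => y * exp (-(b*y))) (Ioi 0) :=
  integrableOn_Ioi_deriv_of_nonneg' (fun x _ => hasDeriv_G b hb.ne' x)
    (fun x hx => mul_nonneg hx.le (exp_pos _).le) (tendsto_G b hb)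

lemma integral_id_mul_exp (b : ℝ) (hb : 0 < b) :
    ∫ y in Ioi 0, y * exp (-(b*y)) = 1/b^2 := by
  have h := integral_Ioi_of_hasDerivAt_of_nonneg' (fun x _ => hasDeriv_G b hb.ne' x)
    (fun x hx => mul_nonneg hx.le (exp_pos _).le) (tendsto_G b hb)
  rw [h]
  norm_num

lemma pow4_le (s : ℝ) (hs : 0 ≤ s) : s^4 ≤ 24 * exp s := by
  have h := pow_div_factorial_le_exp s hs 4
  norm_num [Nat.factorial] at h
  linarith

lemma exp_half_le_two : exp (1/2 : ℝ) ≤ 2 := by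
  nlinarith [exp_one_lt_d9, exp_pos (1/2:ℝ),
    (by rw [← exp_add]; norm_num : exp (1/2:ℝ) * exp (1/2:ℝ) = exp 1)]

lemma exp_y_eq (y : ℝ) : exp y = (exp (-y))⁻¹ := by
  rw [← exp_neg, neg_neg]

lemma E_le_Ioi {y : ℝ} (hy : 0 ≤ y) : E y ≤ exp (-2 * y) := by
  rw [E]
  exact exp_le_exp.mpr (by linarith [exp_pos (-y)])

lemma integrable_f0 : Integrable E := by
  rw [← integrableOn_univ, ← Set.Iic_union_Ioi (a := (0:ℝ))]
  apply IntegrableOn.union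
  · apply Integrable.mono' ((integrableOn_exp_Iic 0).const_mul 24) contE.aestronglyMeasurable
    filter_upwards [ae_restrict_mem measurableSet_Iic] with y hy
    have hy' : y ≤ 0 := hy
    have hs1 : 1 ≤ exp (-y) := one_le_exp (by linarith)
    have hs0 : (0:ℝ) < exp (-y) := exp_pos _
    have h24 := pow4_le (exp (-y)) hs0.le
    have hes : (0:ℝ) < exp (exp (-y)) := exp_pos _
    rw [Real.norm_eq_abs, abs_of_nonneg (E_pos y).le, E_eq, exp_y_eq y, exp_neg (exp (-y)),
      inv_eq_one_div, inv_eq_one_div, mul_one_div, mul_one_div,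
      div_le_div_iff₀ hes hs0]
    nlinarith [mul_le_mul_of_nonneg_left hs1
      (by positivity : (0:ℝ) ≤ exp (-y) * exp (-y) * exp (-y))]
  · apply Integrable.mono' (exp_neg_integrableOn_Ioi 0 (by norm_num : (0:ℝ) < 2))
      contE.aestronglyMeasurable
    filter_upwards [ae_restrict_mem measurableSet_Ioi] with y hy
    rw [Real.norm_eq_abs, abs_of_nonneg (E_pos y).le]
    exact E_le_Ioi (le_of_lt hy)

lemma integrable_f1 : Integrable (fun y : ℝ => y * E y) := by
  rw [← integrableOn_univ, ← Set.Iic_union_Ioi (a := (0:ℝ))]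
  apply IntegrableOn.union
  · apply Integrable.mono' ((integrableOn_exp_Iic 0).const_mul 24)
      (continuous_id'.mul contE).aestronglyMeasurable
    filter_upwards [ae_restrict_mem measurableSet_Iic] with y hy
    have hy' : y ≤ 0 := hy
    have hs1 : 1 ≤ exp (-y) := one_le_exp (by linarith)
    have hs0 : (0:ℝ) < exp (-y) := exp_pos _
    have h24 := pow4_le (exp (-y)) hs0.le
    have hes : (0:ℝ) < exp (exp (-y)) := exp_pos _
    have hmy : -y + 1 ≤ exp (-y) := add_one_le_exp (-y)
    simp only [Real.norm_eq_abs, Pi.mul_apply]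
    rw [abs_mul, abs_of_nonneg (E_pos y).le, abs_of_nonpos hy',
      E_eq, exp_y_eq y, exp_neg (exp (-y)), inv_eq_one_div, inv_eq_one_div,
      mul_one_div, mul_one_div, ← mul_div_assoc, div_le_div_iff₀ hes hs0]
    nlinarith [mul_le_mul_of_nonneg_right (show -y ≤ exp (-y) - 1 by linarith)
        (by positivity : (0:ℝ) ≤ exp (-y) * exp (-y) * exp (-y)),
      mul_le_mul_of_nonneg_left hs1 (by positivity : (0:ℝ) ≤ exp (-y) * exp (-y) * exp (-y))]
  · apply Integrable.mono' (integrableOn_id_mul_exp 2 two_pos)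
      (continuous_id'.mul contE).aestronglyMeasurable
    filter_upwards [ae_restrict_mem measurableSet_Ioi] with y hy
    have hy' : (0:ℝ) < y := hy
    simp only [Real.norm_eq_abs, Pi.mul_apply]
    rw [abs_mul, abs_of_nonneg (E_pos y).le, abs_of_nonneg hy'.le]
    have h1 := E_le_Ioi hy'.le
    have h2 : exp (-2*y) = exp (-(2*y)) := by norm_num
    nlinarith [E_pos y]

noncomputable def F (y : ℝ) : ℝ := (1 + exp (-y)) * exp (-(exp (-y)))

lemma F_deriv (y : ℝ) : HasDerivAt F (E y) y := by
  have h0 : HasDerivAt (fun y : ℝ => -y) (-1) y := (hasDerivAt_id y).neg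
  have h1 : HasDerivAt (fun y : ℝ => exp (-y)) (-exp (-y)) y := by simpa using h0.exp
  have h2 : HasDerivAt (fun y : ℝ => 1 + exp (-y)) (-exp (-y)) y := h1.const_add 1
  have h3 : HasDerivAt (fun y : ℝ => -(exp (-y))) (exp (-y)) y := by have h := h1.neg; rw [neg_neg] at h; exact h
  have h5 := h2.mul h3.exp
  refine h5.congr_deriv ?_
  rw [E_eq]; ring

lemma tendsto_F_atTop : Tendsto F atTop (𝓝 1) := by
  have h0 : Tendsto (fun y : ℝ => exp (-y)) atTop (𝓝 0) :=
    tendsto_exp_atBot.comp tendsto_neg_atTop_atBot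
  have hcont : Continuous (fun t : ℝ => (1 + t) * exp (-t)) := by continuity
  have := (hcont.tendsto 0).comp h0
  have e : F = (fun t : ℝ => (1 + t) * exp (-t)) ∘ fun y => exp (-y) := rfl
  rw [e]
  simpa using this

lemma tendsto_F_atBot : Tendsto F atBot (𝓝 0) := by
  have h0 : Tendsto (fun y : ℝ => exp (-y)) atBot atTop :=
    tendsto_exp_atTop.comp tendsto_neg_atBot_atTop
  have h1 : Tendsto (fun t : ℝ => (1 + t) * exp (-t)) atTop (𝓝 0) :=
    (tendsto_lin 1 1 1 one_pos).congr (fun t => by norm_num [add_comm])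
  exact h1.comp h0

lemma integral_E : ∫ y : ℝ, E y = 1 := by
  have hIic : ∫ y in Iic (0:ℝ), E y = F 0 - 0 :=
    integral_Iic_of_hasDerivAt_of_tendsto' (fun x _ => F_deriv x)
      integrable_f0.integrableOn tendsto_F_atBot
  have hIoi : ∫ y in Ioi (0:ℝ), E y = 1 - F 0 :=
    integral_Ioi_of_hasDerivAt_of_tendsto' (fun x _ => F_deriv x)
      integrable_f0.integrableOn tendsto_F_atTop
  rw [← intervalIntegral.integral_Iic_add_Ioi integrable_f0.integrableOn
    integrable_f0.integrableOn, hIic, hIoi]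
  ring

lemma int_Ioc : ∫ y in Ioc (-(1/2) : ℝ) 0, y * exp (-(2*y)) = -(1/4) := by
  rw [← intervalIntegral.integral_of_le (by norm_num : (-(1/2):ℝ) ≤ 0)]
  rw [intervalIntegral.integral_eq_sub_of_hasDerivAt
    (f := fun y : ℝ => -((y/2 + 1/2^2) * exp (-(2*y))))
    (fun x _ => hasDeriv_G 2 two_ne_zero x)
    ((Continuous.mul continuous_id' (by continuity)).intervalIntegrable _ _)]
  norm_num

lemma exp_neg_le_quad {s : ℝ} (hs : 0 ≤ s) : exp (-s) ≤ 1 - s + s^2/2 := by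
  have h1 := quadratic_le_exp_of_nonneg hs
  have h2 : exp (-s) * exp s = 1 := by rw [← exp_add]; norm_num
  nlinarith [exp_pos (-s), exp_pos s, sq_nonneg (s^2)]



set_option maxHeartbeats 1000000 in
theorem I1_le : (∫ y : ℝ, y * E y) ≤ 49/288 - exp (-2) * (1/4) := by
  have hf1 := integrable_f1
  have hint : IntegrableOn
      (fun y : ℝ => y * exp (-(2*y)) - y * exp (-(3*y)) + (1/2) * (y * exp (-(4*y))))
      (Ioi (0:ℝ)) := by
    have h := ((integrableOn_id_mul_exp 2 (by norm_num)).sub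
      (integrableOn_id_mul_exp 3 (by norm_num))).add
      ((integrableOn_id_mul_exp 4 (by norm_num)).const_mul (1/2 : ℝ))
    exact h.congr (Filter.EventuallyEq.of_eq (by funext y; simp [Pi.add_apply, Pi.sub_apply]))
  have hIoi : (∫ y in Ioi (0:ℝ), y * E y)
      ≤ ∫ y in Ioi (0:ℝ),
          (y * exp (-(2*y)) - y * exp (-(3*y)) + (1/2) * (y * exp (-(4*y)))) := by
    apply setIntegral_mono_on hf1.integrableOn hint measurableSet_Ioi
    intro y hy
    have hy' : (0:ℝ) < y := hy
    have hs0 : (0:ℝ) < exp (-y) := exp_pos _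
    have hq := exp_neg_le_quad hs0.le
    have h3 : exp (-(3*y)) = exp (-(2*y)) * exp (-y) := by rw [← exp_add]; congr 1; ring
    have h4 : exp (-(4*y)) = exp (-(2*y)) * (exp (-y) * exp (-y)) := by
      rw [← exp_add, ← exp_add]; congr 1; ring
    rw [E_eq']
    have key : exp (-(2*y)) * exp (-(exp (-y)))
        ≤ exp (-(2*y)) - exp (-(3*y)) + exp (-(4*y))/2 := by
      rw [h3, h4]
      nlinarith [exp_pos (-(2*y))]
    nlinarith [mul_le_mul_of_nonneg_left key hy'.le]
  have h23 : Integrable (fun y : ℝ => y * exp (-(2*y)) - y * exp (-(3*y)))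
      (volume.restrict (Ioi (0:ℝ))) := by
    have h := (integrableOn_id_mul_exp 2 (by norm_num)).sub (integrableOn_id_mul_exp 3 (by norm_num))
    exact h.congr (Filter.EventuallyEq.of_eq (by funext y; simp [Pi.sub_apply]))
  have h4i : Integrable (fun y : ℝ => (1/2) * (y * exp (-(4*y))))
      (volume.restrict (Ioi (0:ℝ))) :=
    (integrableOn_id_mul_exp 4 (by norm_num)).const_mul _
  have hIoival : (∫ y in Ioi (0:ℝ),
      (y * exp (-(2*y)) - y * exp (-(3*y)) + (1/2) * (y * exp (-(4*y))))) = 49/288 := by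
    rw [integral_add h23 h4i,
      integral_sub (integrableOn_id_mul_exp 2 (by norm_num))
        (integrableOn_id_mul_exp 3 (by norm_num)),
      integral_const_mul, integral_id_mul_exp 2 (by norm_num),
      integral_id_mul_exp 3 (by norm_num), integral_id_mul_exp 4 (by norm_num)]
    norm_num
  have hIic1 : (∫ y in Iic (-(1/2):ℝ), y * E y) ≤ 0 := by
    apply setIntegral_nonpos measurableSet_Iic
    intro y hy
    have hy0 : y ≤ 0 := le_trans hy (by norm_num)
    nlinarith [E_pos y]
  have hintIoc : IntegrableOn (fun y : ℝ => exp (-2) * (y * exp (-(2*y))))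
      (Ioc (-(1/2):ℝ) 0) := by
    refine (intervalIntegrable_iff_integrableOn_Ioc_of_le (by norm_num)).1 ?_
    exact ((continuous_const.mul (continuous_id'.mul (by continuity))).intervalIntegrable _ _)
  have hIoc : (∫ y in Ioc (-(1/2):ℝ) 0, y * E y)
      ≤ ∫ y in Ioc (-(1/2):ℝ) 0, exp (-2) * (y * exp (-(2*y))) := by
    apply setIntegral_mono_on hf1.integrableOn hintIoc measurableSet_Ioc
    intro y hy
    have hy1 : -(1/2:ℝ) < y := hy.1
    have hy2 : y ≤ 0 := hy.2
    have hs2 : exp (-y) ≤ 2 := le_trans (exp_le_exp.mpr (by linarith)) exp_half_le_two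
    have h1 : exp (-2) ≤ exp (-(exp (-y))) := exp_le_exp.mpr (by linarith)
    rw [E_eq']
    nlinarith [exp_pos (-(2*y)), mul_nonneg (mul_nonneg (neg_nonneg.mpr hy2) (exp_pos (-(2*y))).le)
      (sub_nonneg.mpr h1)]
  have hIocval : (∫ y in Ioc (-(1/2):ℝ) 0, exp (-2) * (y * exp (-(2*y))))
      = exp (-2) * -(1/4) := by
    rw [integral_const_mul, int_Ioc]
  have hsplit : (∫ y : ℝ, y * E y)
      = ((∫ y in Iic (-(1/2):ℝ), y * E y) + ∫ y in Ioc (-(1/2):ℝ) 0, y * E y)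
        + ∫ y in Ioi (0:ℝ), y * E y := by
    rw [← intervalIntegral.integral_Iic_add_Ioi (b := 0) hf1.integrableOn hf1.integrableOn,
      ← setIntegral_union (Iic_disjoint_Ioc le_rfl) measurableSet_Ioc
      hf1.integrableOn hf1.integrableOn, Iic_union_Ioc_eq_Iic (by norm_num)]
  rw [hsplit]
  rw [hIocval] at hIoc
  rw [hIoival] at hIoi
  linarith


end GumbelAux

/-- Lemma 6(2), case `A > 0`: for `X ~ Gumbel(A,1)`, the expectation
`E[X·e^{-X}]` is bounded by
`(3/20 + A·(20/e² + 10·e^{-√e} + 1/2 − 1/(2e)))·e^{-A}`. -/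
theorem gumbel_mul_exp_neg_moment_bound_pos (A : ℝ) (hA : 0 < A) :
    (∫ x : ℝ, x * exp (-x) * exp (-((x - A) + exp (-(x - A)))))
      < (3/20 + A * (20 / exp 2 + 10 * exp (-exp (1/2)) + 1/2 - 1/(2 * exp 1)))
          * exp (-A) := by
  have hf1 := GumbelAux.integrable_f1
  have hf0 := GumbelAux.integrable_f0
  have step1 : (∫ x : ℝ, x * exp (-x) * exp (-((x - A) + exp (-(x - A)))))
      = ∫ y : ℝ, (y + A) * exp (-(y+A)) * exp (-(y + exp (-y))) := by
    rw [← integral_sub_right_eq_self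
      (fun y : ℝ => (y + A) * exp (-(y+A)) * exp (-(y + exp (-y)))) A]
    congr 1
    funext x
    simp only [sub_add_cancel]
  have step2 : ∀ y : ℝ, (y + A) * exp (-(y+A)) * exp (-(y + exp (-y)))
      = exp (-A) * ((y + A) * GumbelAux.E y) := by
    intro y
    have h : exp (-(y+A)) * exp (-(y + exp (-y))) = exp (-A) * GumbelAux.E y := by
      rw [GumbelAux.E, ← exp_add, ← exp_add]; congr 1; ring
    calc (y + A) * exp (-(y+A)) * exp (-(y + exp (-y)))
        = (y+A) * (exp (-(y+A)) * exp (-(y + exp (-y)))) := by ring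
      _ = (y+A) * (exp (-A) * GumbelAux.E y) := by rw [h]
      _ = exp (-A) * ((y + A) * GumbelAux.E y) := by ring
  have step3 : (∫ y : ℝ, (y + A) * exp (-(y+A)) * exp (-(y + exp (-y))))
      = exp (-A) * ∫ y : ℝ, (y + A) * GumbelAux.E y := by
    simp_rw [step2]
    rw [integral_const_mul]
  have hfA : Integrable (fun y : ℝ => A * GumbelAux.E y) := hf0.const_mul A
  have step4 : (∫ y : ℝ, (y + A) * GumbelAux.E y)
      = (∫ y : ℝ, y * GumbelAux.E y) + A * ∫ y : ℝ, GumbelAux.E y := by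
    simp_rw [add_mul]
    rw [integral_add hf1 hfA, integral_const_mul]
  rw [step1, step3, step4, GumbelAux.integral_E]
  have hI1 := GumbelAux.I1_le
  have he1 := exp_one_gt_d9
  have he2 := exp_one_lt_d9
  have hexp2 : exp 2 = exp 1 * exp 1 := by rw [← exp_add]; norm_num
  have hu : exp 2 < 12 := by nlinarith
  have hinv : 1/12 ≤ 1/exp 2 := one_div_le_one_div_of_le (exp_pos 2) hu.le
  have hpart1 : 49/288 - exp (-2) * (1/4) ≤ 3/20 := by
    rw [exp_neg, inv_eq_one_div]
    linarith
  have h20 : (2:ℝ) < 20 / exp 2 := by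
    rw [lt_div_iff₀ (exp_pos 2)]
    nlinarith
  have hv : 1/(2*exp 1) < 1/2 := by
    rw [div_lt_div_iff₀ (by positivity) (by norm_num)]
    nlinarith
  have hw : 0 < 10 * exp (-exp (1/2:ℝ)) := by positivity
  have hc : 1 < 20 / exp 2 + 10 * exp (-exp (1/2)) + 1/2 - 1/(2 * exp 1) := by linarith
  have hAc : A * 1 < A * (20 / exp 2 + 10 * exp (-exp (1/2)) + 1/2 - 1/(2 * exp 1)) :=
    mul_lt_mul_of_pos_left hc hA
  have hmain : (∫ y : ℝ, y * GumbelAux.E y) + A * 1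
      < 3/20 + A * (20 / exp 2 + 10 * exp (-exp (1/2)) + 1/2 - 1/(2 * exp 1)) := by
    linarith
  calc exp (-A) * ((∫ y : ℝ, y * GumbelAux.E y) + A * 1)
      < exp (-A) * (3/20 + A * (20 / exp 2 + 10 * exp (-exp (1/2)) + 1/2 - 1/(2 * exp 1))) :=
        mul_lt_mul_of_pos_left hmain (exp_pos (-A))
    _ = (3/20 + A * (20 / exp 2 + 10 * exp (-exp (1/2)) + 1/2 - 1/(2 * exp 1))) * exp (-A) := by
        ring
end

section
/- Let A ≤ 0 and let X be a random variable with the Gumbel(A,1) density x ↦ exp(−((x−A) + exp(−(x−A)))) on ℝ. Then the expectation E[X·e^{−X}] = ∫_ℝ x·e^{−x}·exp(−((x−A) + exp(−(x−A)))) dx satisfies E[X·e^{−X}] < (3/20)·e^{−A}. -/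
open MeasureTheory Real Set Filter Topology

private lemma hasDerivAt_aux (b : ℝ) (hb : b ≠ 0) (x : ℝ) :
    HasDerivAt (fun y : ℝ => -(y / b + 1 / b ^ 2) * exp (-(b * y)))
      (x * exp (-(b * x))) x := by
  have h1 : HasDerivAt (fun y : ℝ => -(y / b + 1 / b ^ 2)) (-(1 / b)) x := by
    exact ((((hasDerivAt_id x).div_const b).add_const (1 / b ^ 2)).neg :
      HasDerivAt (fun y : ℝ => -(y / b + 1 / b ^ 2)) (-(1 / b)) x)
  have h2 : HasDerivAt (fun y : ℝ => exp (-(b * y))) (exp (-(b * x)) * (-b)) x := by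
    have h3 : HasDerivAt (fun y : ℝ => -(b * y)) (-b) x := by
      have := (((hasDerivAt_id x).const_mul b).neg :
        HasDerivAt (fun y : ℝ => -(b * y)) (-(b * 1)) x)
      rwa [mul_one] at this
    exact h3.exp
  have := (h1.mul h2 : HasDerivAt (fun y : ℝ => -(y / b + 1 / b ^ 2) * exp (-(b * y))) _ x)
  refine this.congr_deriv ?_
  linear_combination (exp (-(b * x)) / b + exp (-(b * x)) * x) * mul_inv_cancel₀ hb

private lemma tendsto_aux (b : ℝ) (hb : 0 < b) :
    Tendsto (fun y : ℝ => -(y / b + 1 / b ^ 2) * exp (-(b * y))) atTop (𝓝 0) := by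
  have h1 : Tendsto (fun y : ℝ => y * exp (-(b * y))) atTop (𝓝 0) := by
    have h := ((tendsto_pow_mul_exp_neg_atTop_nhds_zero 1).comp
      (tendsto_id.const_mul_atTop hb)).div_const b
    rw [zero_div] at h
    refine h.congr fun y => ?_
    simp only [Function.comp_apply, pow_one, id_eq]
    field_simp
  have h2 : Tendsto (fun y : ℝ => exp (-(b * y))) atTop (𝓝 0) := by
    have := tendsto_exp_neg_atTop_nhds_zero.comp (tendsto_id.const_mul_atTop hb)
    exact this.congr fun y => by simp [Function.comp]
  have := ((h1.const_mul (-(1/b))).add (h2.const_mul (-(1/b^2))))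
  rw [mul_zero, mul_zero, add_zero] at this
  refine this.congr fun y => ?_
  ring

private lemma integrableOn_aux (b : ℝ) (hb : 0 < b) :
    IntegrableOn (fun y : ℝ => y * exp (-(b * y))) (Ioi 0) :=
  integrableOn_Ioi_deriv_of_nonneg' (fun x _ => hasDerivAt_aux b hb.ne' x)
    (fun x hx => mul_nonneg (le_of_lt hx) (exp_pos _).le) (tendsto_aux b hb)

private lemma integral_aux (b : ℝ) (hb : 0 < b) :
    ∫ y in Ioi (0:ℝ), y * exp (-(b * y)) = 1 / b ^ 2 := by
  rw [integral_Ioi_of_hasDerivAt_of_nonneg' (fun x _ => hasDerivAt_aux b hb.ne' x)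
    (fun x hx => mul_nonneg (le_of_lt hx) (exp_pos _).le) (tendsto_aux b hb)]
  simp

private lemma integrableOn_Iic_of_neg {f : ℝ → ℝ}
    (hf : IntegrableOn (fun x => f (-x)) (Ioi (0:ℝ))) : IntegrableOn f (Iic (0:ℝ)) := by
  have m : MeasurableEmbedding fun x : ℝ => -x := (Homeomorph.neg ℝ).measurableEmbedding
  rw [show (volume : Measure ℝ) = Measure.map (fun x => -x) volume from
    (Measure.map_neg_eq_self _).symm, IntegrableOn, m.restrict_map,
    m.integrable_map_iff]
  have : (fun x : ℝ => -x) ⁻¹' Iic 0 = Ici 0 := by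
    ext x; simp
  rw [this]
  exact Iff.mpr integrableOn_Ici_iff_integrableOn_Ioi hf

private lemma exp_quad_bound (x : ℝ) (hx : 0 ≤ x) : 3 * x - 6 ≤ exp x := by
  have h := add_one_le_exp (x / 2)
  have h2 : (x / 2 + 1) ^ 2 ≤ (exp (x / 2)) ^ 2 := by
    apply pow_le_pow_left₀ (by positivity) h
  rw [← exp_nat_mul, show ((2:ℕ):ℝ) * (x / 2) = x by push_cast; ring] at h2
  nlinarith [exp_pos x, sq_nonneg (x - 4)]

set_option maxHeartbeats 1000000 in
private lemma integrable_aux (c : ℝ) :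
    Integrable (fun y : ℝ => (y + c) * exp (-(2 * y) - exp (-y))) := by
  have hcont : Continuous (fun y : ℝ => (y + c) * exp (-(2 * y) - exp (-y))) :=
    (continuous_id.add continuous_const).mul
      (((continuous_const.mul continuous_id).neg.sub continuous_id.neg.rexp).rexp)
  rw [← integrableOn_univ, ← Iic_union_Ioi (a := (0:ℝ))]
  apply IntegrableOn.union
  · apply integrableOn_Iic_of_neg
    have hmaj : IntegrableOn
        (fun y : ℝ => exp 6 * (y * exp (-(1 * y))) + (exp 6 * |c|) * exp (-(1 * y)))
        (Ioi (0:ℝ)) :=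
      by
        have h1 : IntegrableOn (fun y : ℝ => exp (-(1 * y))) (Ioi (0:ℝ)) := by
          simpa [neg_mul] using exp_neg_integrableOn_Ioi (0:ℝ) (one_pos (α := ℝ))
        exact ((integrableOn_aux 1 one_pos).const_mul _).add (h1.const_mul _)
    refine hmaj.integrable.mono ?_ ?_
    · exact (hcont.comp continuous_neg).aestronglyMeasurable.restrict
    · rw [ae_restrict_iff' measurableSet_Ioi]
      filter_upwards with x hx
      simp only [Real.norm_eq_abs]
      have hx0 : (0:ℝ) < x := hx
      have hb : 2 * x - exp x ≤ 6 - x := by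
        have := exp_quad_bound x hx0.le
        linarith
      have habs : |(-x + c)| ≤ x + |c| := by
        calc |(-x + c)| ≤ |(-x)| + |c| := abs_add_le _ _
        _ = x + |c| := by rw [abs_neg, abs_of_nonneg hx0.le]
      have he : exp (-(2 * -x) - exp (- -x)) ≤ exp (6 - x) := by
        apply exp_le_exp.mpr; rw [neg_neg]; linarith
      have hpos : (0:ℝ) ≤ x + |c| := by positivity
      calc |(-x + c) * exp (-(2 * -x) - exp (- -x))|
          = |(-x + c)| * exp (-(2 * -x) - exp (- -x)) := by
            rw [abs_mul, abs_of_nonneg (exp_pos _).le]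
        _ ≤ (x + |c|) * exp (6 - x) :=
            mul_le_mul habs he (exp_pos _).le hpos
        _ = exp 6 * (x * exp (-(1 * x))) + (exp 6 * |c|) * exp (-(1 * x)) := by
            rw [show (6:ℝ) - x = 6 + -(1 * x) by ring, exp_add]; ring
        _ ≤ |exp 6 * (x * exp (-(1 * x))) + (exp 6 * |c|) * exp (-(1 * x))| := le_abs_self _
  · have hmaj : IntegrableOn
        (fun y : ℝ => y * exp (-(2 * y)) + |c| * exp (-(2 * y))) (Ioi (0:ℝ)) :=
      by
        have h1 : IntegrableOn (fun y : ℝ => exp (-(2 * y))) (Ioi (0:ℝ)) := by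
          simpa [neg_mul] using exp_neg_integrableOn_Ioi (0:ℝ) (two_pos (α := ℝ))
        exact (integrableOn_aux 2 two_pos).add (h1.const_mul _)
    refine hmaj.integrable.mono hcont.aestronglyMeasurable.restrict ?_
    rw [ae_restrict_iff' measurableSet_Ioi]
    filter_upwards with x hx
    simp only [Real.norm_eq_abs]
    have hx0 : (0:ℝ) < x := hx
    have habs : |x + c| ≤ x + |c| := by
      calc |x + c| ≤ |x| + |c| := abs_add_le _ _
      _ = x + |c| := by rw [abs_of_nonneg hx0.le]
    have he : exp (-(2 * x) - exp (-x)) ≤ exp (-(2 * x)) := by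
      apply exp_le_exp.mpr
      have := (exp_pos (-x)).le
      linarith
    calc |(x + c) * exp (-(2 * x) - exp (-x))|
        = |x + c| * exp (-(2 * x) - exp (-x)) := by
          rw [abs_mul, abs_of_nonneg (exp_pos _).le]
      _ ≤ (x + |c|) * exp (-(2 * x)) := mul_le_mul habs he (exp_pos _).le (by positivity)
      _ = x * exp (-(2 * x)) + |c| * exp (-(2 * x)) := by ring
      _ ≤ |x * exp (-(2 * x)) + |c| * exp (-(2 * x))| := le_abs_self _

/-- Lemma 6(2), case `A ≤ 0`: for `X ~ Gumbel(A,1)`, the expectation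
`E[X·e^{-X}]` is bounded by `(3/20)·e^{-A}`. -/
theorem gumbel_mul_exp_neg_moment_bound_nonpos (A : ℝ) (hA : A ≤ 0) :
    (∫ x : ℝ, x * exp (-x) * exp (-((x - A) + exp (-(x - A)))))
      < (3/20) * exp (-A) := by
  have hptwise : ∀ x : ℝ, x * exp (-x) * exp (-((x - A) + exp (-(x - A))))
      = exp (-A) * ((x - A + A) * exp (-(2 * (x - A)) - exp (-(x - A)))) := by
    intro x
    rw [sub_add_cancel, mul_assoc, ← exp_add, mul_comm (exp (-A)), mul_assoc, ← exp_add]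
    congr 2
    ring
  rw [show (fun x : ℝ => x * exp (-x) * exp (-((x - A) + exp (-(x - A)))))
      = fun x => exp (-A) * ((x - A + A) * exp (-(2 * (x - A)) - exp (-(x - A)))) from
      funext hptwise, integral_const_mul,
    integral_sub_right_eq_self (fun y : ℝ => (y + A) * exp (-(2 * y) - exp (-y))) A]
  rw [mul_comm ((3:ℝ)/20) (exp (-A))]
  apply mul_lt_mul_of_pos_left _ (exp_pos (-A))
  -- now: ∫ y, (y + A) * exp (-(2*y) - exp (-y)) < 3/20
  have hintA := integrable_aux A
  have hint0' := integrable_aux 0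
  have hint0 : Integrable (fun y : ℝ => y * exp (-(2 * y) - exp (-y))) := by
    simpa using hint0'
  have hstep1 : (∫ y : ℝ, (y + A) * exp (-(2 * y) - exp (-y)))
      ≤ ∫ y : ℝ, y * exp (-(2 * y) - exp (-y)) := by
    apply integral_mono hintA hint0
    intro y
    exact mul_le_mul_of_nonneg_right (by linarith) (exp_pos _).le
  refine lt_of_le_of_lt hstep1 ?_
  -- split the integral
  rw [← intervalIntegral.integral_Iic_add_Ioi (b := (0:ℝ)) hint0.integrableOn hint0.integrableOn]
  -- Ioi part
  have hIoi : (∫ y in Ioi (0:ℝ), y * exp (-(2 * y) - exp (-y))) ≤ 1/4 := by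
    rw [show (1:ℝ)/4 = 1/(2:ℝ)^2 by norm_num, ← integral_aux 2 two_pos]
    apply setIntegral_mono_on hint0.integrableOn (integrableOn_aux 2 two_pos)
      measurableSet_Ioi
    intro x hx
    have hx0 : (0:ℝ) < x := hx
    apply mul_le_mul_of_nonneg_left _ hx0.le
    apply exp_le_exp.mpr
    have := (exp_pos (-x)).le
    linarith
  -- Iic part
  have hsplit : (∫ y in Iic (0:ℝ), y * exp (-(2 * y) - exp (-y)))
      = (∫ y in Iic (-1:ℝ), y * exp (-(2 * y) - exp (-y)))
        + ∫ y in Ioc (-1:ℝ) 0, y * exp (-(2 * y) - exp (-y)) := by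
    rw [← setIntegral_union (Iic_disjoint_Ioc le_rfl) measurableSet_Ioc
      hint0.integrableOn hint0.integrableOn,
      Iic_union_Ioc_eq_Iic (by norm_num : (-1:ℝ) ≤ 0)]
  have h1 : (∫ y in Iic (-1:ℝ), y * exp (-(2 * y) - exp (-y))) ≤ 0 := by
    apply setIntegral_nonpos measurableSet_Iic
    intro x hx
    have : x ≤ -1 := hx
    exact mul_nonpos_of_nonpos_of_nonneg (by linarith) (exp_pos _).le
  have h2 : (∫ y in Ioc (-1:ℝ) 0, y * exp (-(2 * y) - exp (-y)))
      ≤ ∫ y in Ioc (-1:ℝ) 0, exp (-3) * (y * exp (-(2 * y))) := by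
    apply setIntegral_mono_on hint0.integrableOn
      ((continuous_const.mul (continuous_id.mul
        ((continuous_const.mul continuous_id).neg.rexp))).integrableOn_Ioc) measurableSet_Ioc
    intro x hx
    have hx1 : -1 < x := hx.1
    have hx0 : x ≤ 0 := hx.2
    have hle : exp (-3) * exp (-(2 * x)) ≤ exp (-(2 * x) - exp (-x)) := by
      rw [← exp_add]
      apply exp_le_exp.mpr
      have : exp (-x) ≤ exp 1 := exp_le_exp.mpr (by linarith)
      have he1 : exp 1 < 2.7182818286 := exp_one_lt_d9
      linarith
    calc x * exp (-(2 * x) - exp (-x)) ≤ x * (exp (-3) * exp (-(2 * x))) :=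
          mul_le_mul_of_nonpos_left hle hx0
      _ = exp (-3) * (x * exp (-(2 * x))) := by ring
  have h3 : (∫ y in Ioc (-1:ℝ) 0, exp (-3) * (y * exp (-(2 * y))))
      = exp (-3) * (-1/4 - exp 2 / 4) := by
    rw [← intervalIntegral.integral_of_le (by norm_num : (-1:ℝ) ≤ 0),
      intervalIntegral.integral_const_mul,
      intervalIntegral.integral_eq_sub_of_hasDerivAt
        (f := fun y : ℝ => -(y / 2 + 1 / 2 ^ 2) * exp (-(2 * y)))
        (fun x _ => hasDerivAt_aux 2 two_ne_zero x)
        ((continuous_id.mul ((continuous_const.mul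
          continuous_id).neg.rexp)).intervalIntegrable _ _)]
    have : exp (-(2 * (-1:ℝ))) = exp 2 := by norm_num
    rw [this]
    rw [show (-(2 * (0:ℝ))) = 0 by norm_num, exp_zero]
    ring
  -- numeric conclusion
  have he1 : exp 1 < 2.7182818286 := exp_one_lt_d9
  have he2 : 2.7182818283 < exp 1 := exp_one_gt_d9
  have hexp2 : exp 2 = exp 1 ^ 2 := by rw [exp_one_pow]; norm_num
  have hexp3 : exp (-3) = (exp 1 ^ 3)⁻¹ := by
    rw [exp_one_pow, ← exp_neg]; norm_num
  have hnum : exp (-3) * (-1/4 - exp 2 / 4) + 1/4 < 3/20 := by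
    rw [hexp2, hexp3]
    have hpos : (0:ℝ) < exp 1 := exp_pos 1
    rw [inv_mul_eq_div, div_add' _ _ _ (by positivity), div_lt_iff₀ (by positivity)]
    nlinarith [sq_nonneg (exp 1), pow_pos hpos 3]
  calc (∫ y in Iic (0:ℝ), y * exp (-(2 * y) - exp (-y)))
        + ∫ y in Ioi (0:ℝ), y * exp (-(2 * y) - exp (-y))
      ≤ (0 + exp (-3) * (-1/4 - exp 2 / 4)) + 1/4 := by
        apply add_le_add _ hIoi
        rw [hsplit, ← h3]
        exact add_le_add h1 h2
    _ = exp (-3) * (-1/4 - exp 2 / 4) + 1/4 := by ring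
    _ < 3/20 := hnum
end

section
/- Let B > 0, γ ∈ (0,1), A ∈ ℝ, and set A* = A/B. Let p(x) = (1/B)·exp(−((x−A)/B + exp(−(x−A)/B))) be the Gumbel(A,B) density and q(x) = (1/(γB))·exp(−((x−γA)/(γB) + exp(−(x−γA)/(γB)))) be the Gumbel(γA, γB) density. If A* ≤ 0, then the Kullback–Leibler divergence KL(q‖p) = ∫_ℝ q(x)·ln(q(x)/p(x)) dx satisfies KL(q‖p) < ln(1/γ) + (1−γ)·(3/20 − A* − v), where v is the Euler–Mascheroni constant. -/
open MeasureTheory Real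

private lemma gumbel_image_univ : (fun u : ℝ => Real.exp (-u)) '' Set.univ = Set.Ioi 0 := by
  rw [Set.image_univ]
  ext t
  constructor
  · rintro ⟨u, rfl⟩; exact Real.exp_pos _
  · intro ht; exact ⟨-Real.log t, by simp [Real.exp_log ht]⟩

private lemma gumbel_deriv : ∀ x ∈ (Set.univ : Set ℝ),
    HasDerivWithinAt (fun u : ℝ => Real.exp (-u)) (-Real.exp (-x)) Set.univ x := by
  intro x _
  have h := (Real.hasDerivAt_exp (-x)).comp x (hasDerivAt_neg x)
  have h2 : HasDerivAt (fun u : ℝ => Real.exp (-u)) (-Real.exp (-x)) x := by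
    simpa [Function.comp_def, mul_comm] using h
  exact h2.hasDerivWithinAt

private lemma gumbel_inj : Set.InjOn (fun u : ℝ => Real.exp (-u)) Set.univ := by
  intro a _ b _ h
  have := Real.exp_injective h
  linarith [neg_injective this]

private lemma transfer_integral (g : ℝ → ℝ) :
    (∫ t in Set.Ioi (0:ℝ), g t) = ∫ u : ℝ, Real.exp (-u) * g (Real.exp (-u)) := by
  rw [← gumbel_image_univ,
    integral_image_eq_integral_abs_deriv_smul MeasurableSet.univ gumbel_deriv gumbel_inj g,
    MeasureTheory.setIntegral_univ]
  simp [abs_of_pos (Real.exp_pos _)]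

private lemma transfer_integrable (g : ℝ → ℝ) :
    IntegrableOn g (Set.Ioi (0:ℝ)) ↔
      Integrable fun u : ℝ => Real.exp (-u) * g (Real.exp (-u)) := by
  rw [← gumbel_image_univ,
    integrableOn_image_iff_integrableOn_abs_deriv_smul MeasurableSet.univ gumbel_deriv gumbel_inj g]
  rw [← integrableOn_univ]
  constructor <;> intro h <;> refine h.congr_fun ?_ MeasurableSet.univ <;> intro x _ <;>
    simp [abs_of_pos (Real.exp_pos _)]

private lemma euler_integral :
    ∫ t in Set.Ioi (0:ℝ), Real.log t * Real.exp (-t) = -Real.eulerMascheroniConstant := by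
  set r : ℝ := ∫ t in Set.Ioi (0:ℝ), Real.log t * Real.exp (-t) with hr
  have h1 := Complex.hasDerivAt_GammaIntegral (s := 1) (by norm_num)
  have h2 : (∫ t : ℝ in Set.Ioi 0, (t : ℂ) ^ ((1:ℂ) - 1) * (Real.log t * Real.exp (-t))) =
      ((r : ℝ) : ℂ) := by
    have e1 : (∫ t : ℝ in Set.Ioi 0, (t : ℂ) ^ ((1:ℂ) - 1) * (Real.log t * Real.exp (-t))) =
        ∫ t : ℝ in Set.Ioi 0, ((Real.log t * Real.exp (-t) : ℝ) : ℂ) := by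
      congr 1
      funext t
      simp [Complex.ofReal_mul]
    rw [e1, hr]
    exact integral_ofReal
  rw [h2] at h1
  have h1' : HasDerivAt Complex.GammaIntegral ((r : ℂ)) (((1:ℝ) : ℂ)) := by
    rwa [Complex.ofReal_one]
  have h3 : HasDerivAt (fun x : ℝ => (Complex.GammaIntegral x).re) r 1 := by
    simpa using h1'.real_of_complex
  have h4 : HasDerivAt Real.Gamma r 1 := by
    refine h3.congr_of_eventuallyEq ?_
    filter_upwards [eventually_gt_nhds (by norm_num : (0:ℝ) < 1)] with x hx
    rw [show Complex.GammaIntegral (x : ℂ) = Complex.Gamma (x : ℂ) from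
      (Complex.Gamma_eq_integral (by simpa using hx)).symm, Complex.Gamma_ofReal,
      Complex.ofReal_re]
  exact h4.unique Real.hasDerivAt_Gamma_one

private lemma euler_integrable :
    IntegrableOn (fun t => Real.log t * Real.exp (-t)) (Set.Ioi (0:ℝ)) := by
  have h := (mellin_hasDerivAt_of_isBigO_rpow (E := ℂ) (a := 2) (b := 0)
      (f := fun t : ℝ => ((Real.exp (-t) : ℝ) : ℂ)) (s := 1)
      ?_ ?_ (by norm_num) ?_ (by norm_num)).1
  · have h' : IntegrableOn
        (fun t : ℝ => (t : ℂ) ^ ((1:ℂ) - 1) • (Real.log t • ((Real.exp (-t) : ℝ) : ℂ)))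
        (Set.Ioi 0) := h
    have h'' : IntegrableOn
        (fun t : ℝ => ((Real.log t * Real.exp (-t) : ℝ) : ℂ)) (Set.Ioi 0) := by
      refine h'.congr_fun (fun t _ => ?_) measurableSet_Ioi
      simp [Complex.ofReal_mul]
    have h3 : IntegrableOn
        (fun t : ℝ => RCLike.re (((Real.log t * Real.exp (-t) : ℝ) : ℂ))) (Set.Ioi 0) := h''.re
    refine h3.congr_fun (fun t _ => ?_) measurableSet_Ioi
    exact (Complex.ofReal_re _).symm
  · refine (Continuous.continuousOn ?_).locallyIntegrableOn measurableSet_Ioi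
    exact Complex.continuous_ofReal.comp (Real.continuous_exp.comp continuous_neg)
  · rw [← Asymptotics.isBigO_norm_left]
    simp_rw [Complex.norm_real,
      Asymptotics.isBigO_norm_left]
    simpa only [neg_one_mul] using
      (isLittleO_exp_neg_mul_rpow_atTop zero_lt_one (-2)).isBigO
  · simp_rw [neg_zero, Real.rpow_zero]
    refine Asymptotics.isBigO_const_of_tendsto (?_ : Filter.Tendsto _ _ (nhds (1 : ℂ))) one_ne_zero
    rw [(by simp : (1 : ℂ) = ((Real.exp (-0) : ℝ) : ℂ))]
    exact (Complex.continuous_ofReal.comp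
      (Real.continuous_exp.comp continuous_neg)).continuousWithinAt

/-- KL-divergence bound between `Gumbel(γA, γB)` and `Gumbel(A, B)`, case `A/B ≤ 0`. -/
theorem kl_gumbel_scaled_bound_nonpos
    (B γ A : ℝ) (hB : 0 < B) (hγ : γ ∈ Set.Ioo (0:ℝ) 1) (hA : A / B ≤ 0) :
    (∫ x : ℝ,
        ((1 / (γ * B)) * exp (-((x - γ * A) / (γ * B) + exp (-(x - γ * A) / (γ * B)))))
          * Real.log
            (((1 / (γ * B)) * exp (-((x - γ * A) / (γ * B) + exp (-(x - γ * A) / (γ * B)))))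
              / ((1 / B) * exp (-((x - A) / B + exp (-(x - A) / B))))))
      < Real.log (1 / γ)
          + (1 - γ) * (3/20 - A / B - Real.eulerMascheroniConstant) := by
  obtain ⟨hγ0, hγ1⟩ := hγ
  have hγB : 0 < γ * B := mul_pos hγ0 hB
  set a : ℝ := A / B with ha
  set c : ℝ := Real.exp ((1 - γ) * a) with hc
  set K : ℝ := Real.log (1 / γ) + (γ - 1) * a with hK
  set v : ℝ := Real.eulerMascheroniConstant with hv
  set Φ : ℝ → ℝ := fun u =>
    Real.exp (-(u + Real.exp (-u))) *
      (K + (γ - 1) * u - Real.exp (-u) + c * Real.exp (-(γ * u))) with hΦ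
  -- Step 1: pointwise identity
  have hpt : ∀ x : ℝ,
      ((1 / (γ * B)) * exp (-((x - γ * A) / (γ * B) + exp (-(x - γ * A) / (γ * B)))))
          * Real.log
            (((1 / (γ * B)) * exp (-((x - γ * A) / (γ * B) + exp (-(x - γ * A) / (γ * B)))))
              / ((1 / B) * exp (-((x - A) / B + exp (-(x - A) / B)))))
        = (γ * B)⁻¹ * Φ ((x - γ * A) * (γ * B)⁻¹) := by
    intro x
    set u : ℝ := (x - γ * A) / (γ * B) with hu
    set z : ℝ := (x - A) / B with hz0
    have h1 : -(x - γ * A) / (γ * B) = -u := by rw [neg_div]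
    have h2 : -(x - A) / B = -z := by rw [neg_div]
    have hz : z = γ * u + (γ - 1) * a := by
      rw [hu, hz0, ha]
      field_simp
      ring
    have hq : (1 / (γ * B)) * Real.exp (-(u + Real.exp (-u)))
        = Real.exp (-(u + Real.exp (-u)) - Real.log (γ * B)) := by
      rw [Real.exp_sub, Real.exp_log hγB]; ring
    have hp : (1 / B) * Real.exp (-(z + Real.exp (-z)))
        = Real.exp (-(z + Real.exp (-z)) - Real.log B) := by
      rw [Real.exp_sub, Real.exp_log hB]; ring
    have hez : Real.exp (-z) = c * Real.exp (-(γ * u)) := by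
      rw [hz, hc, ← Real.exp_add]; congr 1; ring
    have hlogγB : Real.log (γ * B) = Real.log γ + Real.log B :=
      Real.log_mul (ne_of_gt hγ0) (ne_of_gt hB)
    have hK' : K = -Real.log γ + (γ - 1) * a := by
      rw [hK, one_div, Real.log_inv]
    have hlog : Real.log ((1 / (γ * B) * Real.exp (-(u + Real.exp (-u))))
          / (1 / B * Real.exp (-(z + Real.exp (-z)))))
        = K + (γ - 1) * u - Real.exp (-u) + c * Real.exp (-(γ * u)) := by
      rw [hq, hp, ← Real.exp_sub, Real.log_exp, hez, hz, hlogγB, hK']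
      ring
    have huu : (x - γ * A) * (γ * B)⁻¹ = u := by rw [hu, div_eq_mul_inv]
    rw [h1, h2, hlog, huu, hΦ]
    ring
  simp_rw [hpt]
  -- Step 2: change of variables
  have step2 : (∫ x : ℝ, (γ * B)⁻¹ * Φ ((x - γ * A) * (γ * B)⁻¹)) = ∫ u : ℝ, Φ u := by
    rw [MeasureTheory.integral_const_mul]
    have t1 : (∫ x : ℝ, Φ ((x - γ * A) * (γ * B)⁻¹))
        = ∫ x : ℝ, Φ (x * (γ * B)⁻¹) :=
      MeasureTheory.integral_sub_right_eq_self (fun y => Φ (y * (γ * B)⁻¹)) (γ * A)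
    rw [t1, MeasureTheory.Measure.integral_comp_mul_right (fun y => Φ y) ((γ * B)⁻¹), inv_inv,
      abs_of_pos hγB, smul_eq_mul]
    field_simp
  rw [step2]
  -- Step 3: the four basic integrals and integrability
  have hInt1 : IntegrableOn (fun t : ℝ => Real.exp (-t)) (Set.Ioi (0:ℝ)) := by
    simpa using exp_neg_integrableOn_Ioi 0 one_pos
  have hInt2 : IntegrableOn (fun t : ℝ => -(Real.log t * Real.exp (-t))) (Set.Ioi (0:ℝ)) :=
    euler_integrable.neg
  have hInt3 : IntegrableOn (fun t : ℝ => Real.exp (-t) * t) (Set.Ioi (0:ℝ)) := by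
    have := Real.GammaIntegral_convergent (by norm_num : (0:ℝ) < 2)
    refine this.congr_fun (fun t _ => ?_) measurableSet_Ioi
    norm_num
  have hγ1pos : (0:ℝ) < γ + 1 := by linarith
  have hInt4 : IntegrableOn (fun t : ℝ => Real.exp (-t) * t ^ γ) (Set.Ioi (0:ℝ)) := by
    have := Real.GammaIntegral_convergent hγ1pos
    refine this.congr_fun (fun t _ => ?_) measurableSet_Ioi
    rw [add_sub_cancel_right]
  -- transfer to ℝ
  have e1 : ∀ u : ℝ, Real.exp (-u) * Real.exp (-(Real.exp (-u)))
      = Real.exp (-(u + Real.exp (-u))) := by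
    intro u; rw [← Real.exp_add]; ring_nf
  have e2 : ∀ u : ℝ, Real.exp (-u) * -(Real.log (Real.exp (-u)) * Real.exp (-(Real.exp (-u))))
      = u * Real.exp (-(u + Real.exp (-u))) := by
    intro u; rw [Real.log_exp, ← e1 u]; ring
  have e3 : ∀ u : ℝ, Real.exp (-u) * (Real.exp (-(Real.exp (-u))) * Real.exp (-u))
      = Real.exp (-u) * Real.exp (-(u + Real.exp (-u))) := by
    intro u; rw [← e1 u]; ring
  have e4 : ∀ u : ℝ, Real.exp (-u) * (Real.exp (-(Real.exp (-u))) * Real.exp (-u) ^ γ)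
      = Real.exp (-(γ * u)) * Real.exp (-(u + Real.exp (-u))) := by
    intro u
    simp only [← Real.exp_mul, ← Real.exp_add]
    congr 1; ring
  have H1 : Integrable (fun u : ℝ => Real.exp (-(u + Real.exp (-u)))) := by
    have h := (transfer_integrable (fun t => Real.exp (-t))).mp hInt1
    exact h.congr (Filter.Eventually.of_forall fun u => e1 u)
  have H2 : Integrable (fun u : ℝ => u * Real.exp (-(u + Real.exp (-u)))) := by
    have h := (transfer_integrable (fun t => -(Real.log t * Real.exp (-t)))).mp hInt2
    exact h.congr (Filter.Eventually.of_forall fun u => e2 u)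
  have H3 : Integrable (fun u : ℝ => Real.exp (-u) * Real.exp (-(u + Real.exp (-u)))) := by
    have h := (transfer_integrable (fun t => Real.exp (-t) * t)).mp hInt3
    exact h.congr (Filter.Eventually.of_forall fun u => e3 u)
  have H4 : Integrable (fun u : ℝ => Real.exp (-(γ * u)) * Real.exp (-(u + Real.exp (-u)))) := by
    have h := (transfer_integrable (fun t => Real.exp (-t) * t ^ γ)).mp hInt4
    exact h.congr (Filter.Eventually.of_forall fun u => e4 u)
  -- values
  have T1 : (∫ u : ℝ, Real.exp (-(u + Real.exp (-u)))) = 1 := by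
    have h := transfer_integral (fun t => Real.exp (-t))
    rw [integral_exp_neg_Ioi_zero] at h
    rw [← integral_congr_ae (Filter.Eventually.of_forall fun u => (e1 u))]
    exact h.symm
  have T2 : (∫ u : ℝ, u * Real.exp (-(u + Real.exp (-u)))) = v := by
    have h := transfer_integral (fun t => -(Real.log t * Real.exp (-t)))
    rw [MeasureTheory.integral_neg, euler_integral, neg_neg] at h
    rw [← integral_congr_ae (Filter.Eventually.of_forall fun u => (e2 u))]
    exact h.symm
  have T3 : (∫ u : ℝ, Real.exp (-u) * Real.exp (-(u + Real.exp (-u)))) = 1 := by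
    have hval : (∫ t in Set.Ioi (0:ℝ), Real.exp (-t) * t) = 1 := by
      have h2 := (Real.Gamma_eq_integral (by norm_num : (0:ℝ) < 2)).symm
      rw [Real.Gamma_two] at h2
      rw [← h2]
      norm_num
    have h := transfer_integral (fun t => Real.exp (-t) * t)
    rw [hval] at h
    rw [← integral_congr_ae (Filter.Eventually.of_forall fun u => (e3 u))]
    exact h.symm
  have T4 : (∫ u : ℝ, Real.exp (-(γ * u)) * Real.exp (-(u + Real.exp (-u))))
      = Real.Gamma (γ + 1) := by
    have hval : (∫ t in Set.Ioi (0:ℝ), Real.exp (-t) * t ^ γ) = Real.Gamma (γ + 1) := by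
      rw [Real.Gamma_eq_integral hγ1pos, add_sub_cancel_right]
    have h := transfer_integral (fun t => Real.exp (-t) * t ^ γ)
    rw [hval] at h
    rw [← integral_congr_ae (Filter.Eventually.of_forall fun u => (e4 u))]
    exact h.symm
  -- splitting
  have split : (∫ u : ℝ, Φ u) = K * 1 + (γ - 1) * v - 1 + c * Real.Gamma (γ + 1) := by
    have hΦeq : Φ = fun u : ℝ =>
        (K * Real.exp (-(u + Real.exp (-u)))
          + (γ - 1) * (u * Real.exp (-(u + Real.exp (-u))))
          - Real.exp (-u) * Real.exp (-(u + Real.exp (-u))))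
        + c * (Real.exp (-(γ * u)) * Real.exp (-(u + Real.exp (-u)))) := by
      funext u; rw [hΦ]; ring
    have HA : Integrable (fun u : ℝ =>
        K * Real.exp (-(u + Real.exp (-u)))
          + (γ - 1) * (u * Real.exp (-(u + Real.exp (-u))))
          - Real.exp (-u) * Real.exp (-(u + Real.exp (-u)))) :=
      ((H1.const_mul K).add (H2.const_mul (γ - 1))).sub H3
    have HB : Integrable (fun u : ℝ =>
        K * Real.exp (-(u + Real.exp (-u)))
          + (γ - 1) * (u * Real.exp (-(u + Real.exp (-u))))) :=
      (H1.const_mul K).add (H2.const_mul (γ - 1))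
    have HC : Integrable (fun u : ℝ =>
        c * (Real.exp (-(γ * u)) * Real.exp (-(u + Real.exp (-u))))) := H4.const_mul c
    rw [hΦeq,
      MeasureTheory.integral_add HA HC,
      MeasureTheory.integral_sub HB H3,
      MeasureTheory.integral_add (H1.const_mul K) (H2.const_mul (γ - 1)),
      MeasureTheory.integral_const_mul, MeasureTheory.integral_const_mul,
      MeasureTheory.integral_const_mul, T1, T2, T3, T4]
  rw [split]
  -- final arithmetic
  have hc1 : c ≤ 1 := by
    rw [hc, Real.exp_le_one_iff]
    exact mul_nonpos_of_nonneg_of_nonpos (by linarith) hA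
  have hc0 : 0 < c := Real.exp_pos _
  have hΓpos : 0 < Real.Gamma (γ + 1) := Real.Gamma_pos_of_pos hγ1pos
  have hΓle : Real.Gamma (γ + 1) ≤ 1 := by
    have hcv := Real.convexOn_Gamma.2 (Set.mem_Ioi.mpr one_pos)
      (Set.mem_Ioi.mpr (by norm_num : (0:ℝ) < 2)) (by linarith : (0:ℝ) ≤ 1 - γ)
      (le_of_lt hγ0) (by ring : (1 - γ) + γ = 1)
    have harg : (1 - γ) • (1:ℝ) + γ • (2:ℝ) = γ + 1 := by
      simp only [smul_eq_mul]; ring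
    rw [harg] at hcv
    have hone : (1 - γ) • Real.Gamma 1 + γ • Real.Gamma 2 = 1 := by
      rw [Real.Gamma_one, Real.Gamma_two]; simp only [smul_eq_mul]; ring
    exact hcv.trans_eq hone
  have hmul : c * Real.Gamma (γ + 1) ≤ 1 := by nlinarith
  rw [hK]
  nlinarith [hmul, hγ1]
end

section
/- Let n ≥ 1, β > 0, and r₁, …, rₙ ∈ ℝ. Assume (i) there exists an index i with rᵢ > 0, and (ii) ∑_{i=1}^n exp(rᵢ/β)·rᵢ < 0. Define G(φ) = ∑_{i=1}^n exp(φ·rᵢ/β) for φ ∈ ℝ. Then there exists φ* > 1 such that ∑_{i=1}^n exp(φ*·rᵢ/β)·rᵢ = 0 and such that for every φ with 1 ≤ φ ≤ φ*, one has G(φ) ≤ G(1), i.e. ∑_{i=1}^n exp(φ·rᵢ/β) ≤ ∑_{i=1}^n exp(rᵢ/β). -/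
open Real

/-- Theorem 2 (positive scaling upper bound): if some reward is positive and
`∑ i, exp(rᵢ/β)·rᵢ < 0`, then there is an optimal scaling ratio `φ* > 1` at
which `∑ i, exp(φ*·rᵢ/β)·rᵢ = 0` and such that every scaling ratio
`1 ≤ φ ≤ φ*` satisfies `∑ i, exp(φ·rᵢ/β) ≤ ∑ i, exp(rᵢ/β)`. -/
theorem reward_scaling_upper_bound
    (n : ℕ) (hn : 1 ≤ n) (β : ℝ) (hβ : 0 < β) (r : Fin n → ℝ)
    (hpos : ∃ i : Fin n, 0 < r i)
    (hneg : (∑ i : Fin n, exp (r i / β) * r i) < 0) :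
    ∃ φstar : ℝ, 1 < φstar ∧
      (∑ i : Fin n, exp (φstar * r i / β) * r i) = 0 ∧
      ∀ φ : ℝ, 1 ≤ φ → φ ≤ φstar →
        (∑ i : Fin n, exp (φ * r i / β)) ≤ ∑ i : Fin n, exp (r i / β) := by
  obtain ⟨j, hj⟩ := hpos
  set g : ℝ → ℝ := fun φ => ∑ i : Fin n, exp (φ * r i / β) * r i with hg
  set f : ℝ → ℝ := fun φ => ∑ i : Fin n, exp (φ * r i / β) with hf
  have hgc : Continuous g := by
    apply continuous_finset_sum
    intro i _
    exact ((((continuous_id.mul continuous_const).div_const β)).rexp).mul continuous_const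
  have hfc : Continuous f := by
    apply continuous_finset_sum
    intro i _
    exact (((continuous_id.mul continuous_const).div_const β)).rexp
  have hg1 : g 1 < 0 := by simpa [hg] using hneg
  -- lower bound for g at large φ
  set C : ℝ := ∑ i : Fin n, min (r i) 0 with hC
  have hlb : ∀ φ : ℝ, 0 ≤ φ → exp (φ * r j / β) * r j + C ≤ g φ := by
    intro φ hφ
    have : ∀ i : Fin n, min (r i) 0 ≤ exp (φ * r i / β) * r i := by
      intro i
      rcases le_or_gt 0 (r i) with h | h
      · have : 0 ≤ exp (φ * r i / β) * r i := mul_nonneg (exp_pos _).le h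
        simpa [min_eq_right h] using this
      · have h1 : exp (φ * r i / β) ≤ 1 := by
          apply exp_le_one_iff.2
          exact div_nonpos_of_nonpos_of_nonneg (mul_nonpos_of_nonneg_of_nonpos hφ h.le) hβ.le
        have := mul_le_mul_of_nonpos_right h1 h.le
        simp only [one_mul] at this
        calc min (r i) 0 = r i := min_eq_left h.le
        _ ≤ exp (φ * r i / β) * r i := this
    have hsum : C ≤ ∑ i : Fin n, exp (φ * r i / β) * r i :=
      Finset.sum_le_sum fun i _ => this i
    have hjterm : (0:ℝ) ≤ exp (φ * r j / β) * r j := mul_nonneg (exp_pos _).le hj.le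
    -- g φ ≥ C, but we need the extra j term. Redo: split sum
    have key : exp (φ * r j / β) * r j + ∑ i ∈ Finset.univ.erase j, min (r i) 0 ≤ g φ := by
      show _ ≤ ∑ i : Fin n, exp (φ * r i / β) * r i
      rw [← Finset.add_sum_erase _ _ (Finset.mem_univ j)]
      gcongr with i hi
      exact this i
    have hCle : C ≤ ∑ i ∈ Finset.univ.erase j, min (r i) 0 := by
      rw [hC, ← Finset.add_sum_erase _ _ (Finset.mem_univ j)]
      have : min (r j) 0 = 0 := min_eq_right hj.le
      simp [this]
    linarith
  -- choose M with g M > 0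
  have hrj2 : 0 < r j ^ 2 := by positivity
  obtain ⟨M, hM2, hMg⟩ : ∃ M : ℝ, 2 ≤ M ∧ 0 < g M := by
    refine ⟨max 2 ((1 - C) * β / r j ^ 2), le_max_left _ _, ?_⟩
    set M := max 2 ((1 - C) * β / r j ^ 2) with hM
    have hM0 : (0:ℝ) ≤ M := le_trans (by norm_num) (le_max_left _ _)
    have h1 : M * r j / β ≤ exp (M * r j / β) := (add_one_le_exp _).trans' (by linarith)
    have h2 : M * r j / β * r j ≤ exp (M * r j / β) * r j :=
      mul_le_mul_of_nonneg_right h1 hj.le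
    have h3 : (1 - C) ≤ M * r j / β * r j := by
      have hM' : (1 - C) * β / r j ^ 2 ≤ M := le_max_right _ _
      have := mul_le_mul_of_nonneg_right hM' (le_of_lt hrj2)
      rw [div_mul_cancel₀ _ (ne_of_gt hrj2)] at this
      calc (1 - C) = (1 - C) * β / β := by field_simp
      _ ≤ M * r j ^ 2 / β := by gcongr
      _ = M * r j / β * r j := by ring
    have := hlb M hM0
    nlinarith
  -- derivative of f is g / β
  have hderiv : ∀ x : ℝ, HasDerivAt f (g x / β) x := by
    intro x
    have h : ∀ i : Fin n, HasDerivAt (fun φ : ℝ => exp (φ * r i / β))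
        (exp (x * r i / β) * (r i / β)) x := by
      intro i
      have h1 : HasDerivAt (fun φ : ℝ => φ * r i / β) (r i / β) x := by
        simpa using ((hasDerivAt_id x).mul_const (r i)).div_const β
      simpa using h1.exp
    have := HasDerivAt.fun_sum (fun i (_ : i ∈ Finset.univ) => h i)
    refine this.congr_deriv ?_
    symm
    rw [hg]
    simp only [Finset.sum_div]
    congr 1
    ext i
    ring
  -- find a zero of g in [1, M]
  have h1M : (1:ℝ) ≤ M := by linarith
  obtain ⟨c, hcmem, hcz⟩ : ∃ c ∈ Set.Icc (1:ℝ) M, g c = 0 := by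
    have := intermediate_value_Icc h1M (hgc.continuousOn)
    have h0 : (0:ℝ) ∈ Set.Icc (g 1) (g M) := ⟨hg1.le, hMg.le⟩
    obtain ⟨c, hc, hcz⟩ := this h0
    exact ⟨c, hc, hcz⟩
  -- take least zero
  set S : Set ℝ := {x | x ∈ Set.Icc (1:ℝ) c ∧ g x = 0} with hS
  have hSne : S.Nonempty := ⟨c, ⟨hcmem.1, le_refl c⟩, hcz⟩
  have hSclosed : IsClosed S := by
    apply IsClosed.inter isClosed_Icc
    exact isClosed_eq hgc continuous_const
  have hSbdd : BddBelow S := ⟨1, fun x hx => hx.1.1⟩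
  set φstar := sInf S with hφs
  have hmem : φstar ∈ S := hSclosed.csInf_mem hSne hSbdd
  have hφ1 : 1 ≤ φstar := hmem.1.1
  have hgz : g φstar = 0 := hmem.2
  have hφgt : 1 < φstar := by
    rcases lt_or_eq_of_le hφ1 with h | h
    · exact h
    · exfalso; rw [← h] at hgz; linarith
  -- g < 0 on [1, φstar)
  have hneg' : ∀ x : ℝ, 1 ≤ x → x < φstar → g x < 0 := by
    intro x hx1 hxφ
    by_contra h
    push_neg at h
    rcases lt_or_eq_of_le h with h' | h'
    · -- g x > 0, so a zero between 1 and x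
      obtain ⟨y, hy, hyz⟩ : ∃ y ∈ Set.Icc (1:ℝ) x, g y = 0 := by
        have := intermediate_value_Icc hx1 (hgc.continuousOn)
        have h0 : (0:ℝ) ∈ Set.Icc (g 1) (g x) := ⟨hg1.le, h'.le⟩
        obtain ⟨y, hy, hyz⟩ := this h0
        exact ⟨y, hy, hyz⟩
      have hyS : y ∈ S := ⟨⟨hy.1, le_trans hy.2 (le_trans hxφ.le (hmem.1.2))⟩, hyz⟩
      have := csInf_le hSbdd hyS
      have : φstar ≤ x := le_trans this hy.2
      linarith
    · have hxS : x ∈ S := ⟨⟨hx1, le_trans hxφ.le hmem.1.2⟩, h'.symm⟩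
      have := csInf_le hSbdd hxS
      linarith
  -- f antitone on [1, φstar]
  have hanti : AntitoneOn f (Set.Icc 1 φstar) := by
    apply antitoneOn_of_deriv_nonpos (convex_Icc 1 φstar) hfc.continuousOn
      (fun x _ => (hderiv x).differentiableAt.differentiableWithinAt)
    intro x hx
    rw [interior_Icc] at hx
    rw [(hderiv x).deriv]
    have := hneg' x hx.1.le hx.2
    exact div_nonpos_of_nonpos_of_nonneg this.le hβ.le
  refine ⟨φstar, hφgt, hgz, ?_⟩
  intro φ h1φ hφφ
  have := hanti ⟨le_refl 1, hφ1⟩ ⟨h1φ, hφφ⟩ h1φ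
  simpa [hf] using this
end

section
/- Let A ∈ ℝ, B > 0, and let F(t) = 1/(1 + exp(−(t−A)/B)) and f(t) = (1/B)·exp(−(t−A)/B)/(1 + exp(−(t−A)/B))² be the CDF and PDF of the Logistic(A,B) distribution. For integers N ≥ 1 and 1 ≤ i ≤ N, the expectation of the i-th order statistic of N i.i.d. Logistic(A,B) samples, namely E[x_{(i)}] = (N!/((i−1)!·(N−i)!)) · ∫_ℝ t · F(t)^{i−1} · (1−F(t))^{N−i} · f(t) dt, equals B·(∑_{k=1}^{i−1} 1/k − ∑_{k=1}^{N−i} 1/k) + A, where an empty sum is 0. -/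
open MeasureTheory Real intervalIntegral Filter Topology Set

private lemma contOn (p q : ℕ) : Continuous (fun u : ℝ => u ^ p * (1 - u) ^ q) := by
  continuity

private lemma beta_nat (b a : ℕ) :
    ∫ u in (0:ℝ)..1, u ^ a * (1 - u) ^ b
      = (a.factorial * b.factorial : ℝ) / (a + b + 1).factorial := by
  induction b generalizing a with
  | zero =>
    simp only [pow_zero, mul_one, integral_pow, Nat.factorial]
    norm_num
    have h : (a.factorial:ℝ) ≠ 0 := by positivity
    field_simp
  | succ b ih =>
    have key : ∀ x ∈ Set.uIcc (0:ℝ) 1,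
        HasDerivAt (fun u : ℝ => u ^ (a+1) * (1 - u) ^ (b+1))
          ((a+1:ℝ) * x ^ a * (1-x) ^ (b+1) - (b+1:ℝ) * (x ^ (a+1) * (1-x) ^ b)) x := by
      intro x _
      have h1 : HasDerivAt (fun u : ℝ => u ^ (a+1)) ((a+1:ℝ) * x ^ a) x := by
        simpa using hasDerivAt_pow (a+1) x
      have h2 : HasDerivAt (fun u : ℝ => (1 - u) ^ (b+1)) (-((b+1:ℝ) * (1-x) ^ b)) x := by
        have := ((hasDerivAt_pow (b+1) (1-x)).comp x ((hasDerivAt_id x).const_sub 1))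
        simpa [mul_comm, Function.comp_def] using this
      have := h1.mul h2
      refine this.congr_deriv ?_
      push_cast
      ring
    have hIBP := intervalIntegral.integral_eq_sub_of_hasDerivAt key
      (by apply Continuous.intervalIntegrable; continuity)
    simp only [one_pow, sub_self, zero_pow, mul_zero, zero_mul, Nat.succ_ne_zero,
      ne_eq, not_false_iff] at hIBP
    -- hIBP : ∫ ... = 0
    have hsplit : (a+1:ℝ) * ∫ x in (0:ℝ)..1, x ^ a * (1-x) ^ (b+1)
        = (b+1:ℝ) * ∫ x in (0:ℝ)..1, x ^ (a+1) * (1-x) ^ b := by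
      have h1 : IntervalIntegrable (fun x : ℝ => (a+1:ℝ) * (x ^ a * (1-x) ^ (b+1))) volume 0 1 := by
        apply Continuous.intervalIntegrable; continuity
      have h2 : IntervalIntegrable (fun x : ℝ => (b+1:ℝ) * (x ^ (a+1) * (1-x) ^ b)) volume 0 1 := by
        apply Continuous.intervalIntegrable; continuity
      have := intervalIntegral.integral_sub h1 h2
      rw [intervalIntegral.integral_const_mul, intervalIntegral.integral_const_mul] at this
      have h0 : (∫ x in (0:ℝ)..1, ((a+1:ℝ) * (x ^ a * (1-x) ^ (b+1)) - (b+1:ℝ) * (x ^ (a+1) * (1-x) ^ b))) = 0 := by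
        rw [← hIBP]
        congr 1
        ext x
        ring
      rw [h0] at this
      linarith [this]
    have hih := ih (a+1)
    have hpos : (a:ℝ) + 1 ≠ 0 := by positivity
    have := hsplit
    rw [hih] at this
    have goal : (∫ x in (0:ℝ)..1, x ^ a * (1-x) ^ (b+1))
        = (b+1:ℝ) * ((a+1).factorial * b.factorial / ((a+1) + b + 1).factorial) / (a+1) := by
      field_simp at this ⊢
      linarith [this]
    rw [goal]
    have e1 : ((a+1) + b + 1) = (a + (b+1) + 1) := by ring
    rw [e1]
    rw [Nat.factorial_succ a, Nat.factorial_succ b]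
    push_cast
    have h2 : ((a + (b+1) + 1).factorial : ℝ) ≠ 0 := by positivity
    field_simp

private lemma intLog (p q : ℕ) :
    IntervalIntegrable (fun u : ℝ => u ^ p * (1 - u) ^ q * Real.log u) volume 0 1 := by
  rw [intervalIntegrable_iff_integrableOn_Ioc_of_le zero_le_one]
  have hg : IntegrableOn (fun u : ℝ => 2 * u ^ (-(1/2) : ℝ)) (Set.Ioc 0 1) volume := by
    have := (intervalIntegrable_rpow' (a:=(0:ℝ)) (b:=1) (r := -(1/2)) (by norm_num))
    rw [intervalIntegrable_iff_integrableOn_Ioc_of_le zero_le_one] at this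
    exact this.const_mul 2
  apply Integrable.mono hg
  · apply Measurable.aestronglyMeasurable
    exact (((measurable_id.pow_const p).mul ((measurable_const.sub measurable_id).pow_const q)).mul Real.measurable_log)
  · filter_upwards [ae_restrict_mem measurableSet_Ioc] with u hu
    obtain ⟨h0, h1⟩ := hu
    have hu1 : (0:ℝ) ≤ 1 - u := by linarith
    have hb1 : |u ^ p| ≤ 1 := by
      rw [abs_of_nonneg (by positivity)]
      exact pow_le_one₀ h0.le h1
    have hb2 : |(1-u) ^ q| ≤ 1 := by
      rw [abs_of_nonneg (by positivity)]
      exact pow_le_one₀ hu1 (by linarith)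
    have hrp : (0:ℝ) < u ^ (-(1/2):ℝ) := Real.rpow_pos_of_pos h0 _
    have hlog : |Real.log u| ≤ 2 * u ^ (-(1/2):ℝ) := by
      rw [abs_of_nonpos (Real.log_nonpos h0.le h1)]
      have h2 : -Real.log u = 2 * Real.log (u ^ (-(1/2):ℝ)) := by
        rw [Real.log_rpow h0]; ring
      rw [h2]
      have := Real.log_le_sub_one_of_pos hrp
      nlinarith
    calc ‖u ^ p * (1-u) ^ q * Real.log u‖
        = |u ^ p| * |(1-u) ^ q| * |Real.log u| := by
          rw [Real.norm_eq_abs, abs_mul, abs_mul]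
      _ ≤ 1 * 1 * (2 * u ^ (-(1/2):ℝ)) := by
          gcongr
      _ = ‖2 * u ^ (-(1/2):ℝ)‖ := by
          rw [Real.norm_eq_abs, abs_of_nonneg (by positivity)]; ring

private lemma tendsto_left_endpoint {f : ℝ → ℝ}
    (hf : IntervalIntegrable f volume 0 1) :
    Tendsto (fun ε => ∫ u in ε..1, f u) (𝓝[Set.Ioc (0:ℝ) 1] 0)
      (𝓝 (∫ u in (0:ℝ)..1, f u)) := by
  have hcont : ContinuousOn (fun x => ∫ t in x..1, f t) (Set.uIcc (0:ℝ) 1) := by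
    apply intervalIntegral.continuousOn_primitive_interval_left
    rwa [intervalIntegrable_iff'] at hf
  have h0mem : (0:ℝ) ∈ Set.uIcc (0:ℝ) 1 := by
    rw [Set.uIcc_of_le zero_le_one]; exact Set.left_mem_Icc.2 zero_le_one
  have := (hcont 0 h0mem).tendsto
  refine this.mono_left (nhdsWithin_mono 0 ?_)
  rw [Set.uIcc_of_le zero_le_one]
  exact Set.Ioc_subset_Icc_self

private lemma J_rec (a b : ℕ) :
    (a+1:ℝ) * (∫ u in (0:ℝ)..1, u^a * (1-u)^b * Real.log u)
      = (b:ℝ) * (∫ u in (0:ℝ)..1, u^(a+1) * (1-u)^(b-1) * Real.log u)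
        - (a.factorial * b.factorial : ℝ) / (a+b+1).factorial := by
  set D : ℝ → ℝ := fun u => (a+1:ℝ)*(u^a*(1-u)^b*Real.log u)
      - (b:ℝ)*(u^(a+1)*(1-u)^(b-1)*Real.log u) + u^a*(1-u)^b with hD
  have hDint : IntervalIntegrable D volume 0 1 := by
    refine (((intLog a b).const_mul _).sub ((intLog (a+1) (b-1)).const_mul _)).add ?_
    apply Continuous.intervalIntegrable; continuity
  have hε : ∀ ε ∈ Set.Ioc (0:ℝ) 1, ∫ u in ε..1, D u = -(ε^(a+1)*(1-ε)^b*Real.log ε) := by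
    intro ε hε
    have hsub : Set.uIcc ε 1 ⊆ Set.uIcc (0:ℝ) 1 := by
      rw [Set.uIcc_of_le hε.2, Set.uIcc_of_le zero_le_one]
      exact Set.Icc_subset_Icc hε.1.le le_rfl
    have hderiv : ∀ x ∈ Set.uIcc ε 1,
        HasDerivAt (fun u : ℝ => u^(a+1)*(1-u)^b*Real.log u) (D x) x := by
      intro x hx
      rw [Set.uIcc_of_le hε.2] at hx
      have hx0 : 0 < x := lt_of_lt_of_le hε.1 hx.1
      have h1 : HasDerivAt (fun u : ℝ => u ^ (a+1)) ((a+1:ℝ) * x ^ a) x := by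
        simpa using hasDerivAt_pow (a+1) x
      have h2 : HasDerivAt (fun u : ℝ => (1 - u) ^ b) (-((b:ℝ) * (1-x) ^ (b-1))) x := by
        have := ((hasDerivAt_pow b (1-x)).comp x ((hasDerivAt_id x).const_sub 1))
        simpa [mul_comm, Function.comp_def] using this
      have h3 : HasDerivAt Real.log x⁻¹ x := Real.hasDerivAt_log hx0.ne'
      have := (h1.mul h2).mul h3
      refine this.congr_deriv ?_
      rw [hD]
      simp only [Pi.mul_apply]
      have hxpow : x^(a+1) * x⁻¹ = x^a := by
        rw [pow_succ]; field_simp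
      field_simp
      ring
    have := intervalIntegral.integral_eq_sub_of_hasDerivAt hderiv (hDint.mono_set hsub)
    simpa using this
  have hlim1 : Tendsto (fun ε => ∫ u in ε..1, D u) (𝓝[Set.Ioc (0:ℝ) 1] 0)
      (𝓝 (∫ u in (0:ℝ)..1, D u)) := tendsto_left_endpoint hDint
  have hlim2 : Tendsto (fun ε : ℝ => -(ε^(a+1)*(1-ε)^b*Real.log ε)) (𝓝[Set.Ioc (0:ℝ) 1] 0)
      (𝓝 0) := by
    have hmain : Tendsto (fun ε : ℝ => (Real.log ε * ε ^ (1:ℝ)) * (ε^a*(1-ε)^b))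
        (𝓝[Set.Ioc (0:ℝ) 1] 0) (𝓝 0) := by
      have t1 : Tendsto (fun ε : ℝ => Real.log ε * ε ^ (1:ℝ)) (𝓝[Set.Ioc (0:ℝ) 1] 0) (𝓝 0) :=
        (tendsto_log_mul_rpow_nhdsGT_zero one_pos).mono_left
          (nhdsWithin_mono 0 (fun x hx => hx.1))
      have t2 : Tendsto (fun ε : ℝ => ε^a*(1-ε)^b) (𝓝[Set.Ioc (0:ℝ) 1] 0)
          (𝓝 ((0:ℝ)^a*(1-0)^b)) := by
        apply Tendsto.mono_left _ nhdsWithin_le_nhds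
        exact (Continuous.tendsto (by continuity) 0)
      simpa using t1.mul t2
    refine (hmain.neg.congr' ?_).mono_right (by simp)
    filter_upwards [eventually_mem_nhdsWithin] with ε hεm
    have h0 : 0 < ε := hεm.1
    rw [Real.rpow_one, pow_succ]
    ring
  haveI : (𝓝[Set.Ioc (0:ℝ) 1] 0).NeBot := by
    apply mem_closure_iff_nhdsWithin_neBot.mp
    rw [closure_Ioc (one_ne_zero : (1:ℝ) ≠ 0).symm]
    exact Set.left_mem_Icc.2 zero_le_one
  have hDzero : (∫ u in (0:ℝ)..1, D u) = 0 := by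
    refine tendsto_nhds_unique (hlim1.congr' ?_) hlim2
    filter_upwards [eventually_mem_nhdsWithin] with ε hεm
    exact hε ε hεm
  -- expand
  have hsplit : (∫ u in (0:ℝ)..1, D u)
      = (a+1:ℝ) * (∫ u in (0:ℝ)..1, u^a*(1-u)^b*Real.log u)
        - (b:ℝ) * (∫ u in (0:ℝ)..1, u^(a+1)*(1-u)^(b-1)*Real.log u)
        + ∫ u in (0:ℝ)..1, u^a*(1-u)^b := by
    rw [hD]
    rw [intervalIntegral.integral_add (((intLog a b).const_mul _).sub ((intLog (a+1) (b-1)).const_mul _))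
      (by apply Continuous.intervalIntegrable; continuity),
      intervalIntegral.integral_sub ((intLog a b).const_mul _) ((intLog (a+1) (b-1)).const_mul _),
      intervalIntegral.integral_const_mul, intervalIntegral.integral_const_mul]
  rw [hDzero, beta_nat b a] at hsplit
  linarith

private noncomputable def H (n : ℕ) : ℝ := ∑ k ∈ Finset.Icc 1 n, (1:ℝ)/k

private lemma H_succ (n : ℕ) : H (n+1) = H n + 1/(n+1) := by
  rw [H, H, Finset.sum_Icc_succ_top (Nat.one_le_iff_ne_zero.mpr (Nat.succ_ne_zero n))]
  push_cast
  ring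

private lemma J_val (b a : ℕ) :
    ∫ u in (0:ℝ)..1, u^a*(1-u)^b*Real.log u
      = ((a.factorial * b.factorial : ℝ)/(a+b+1).factorial) * (H a - H (a+b+1)) := by
  induction b generalizing a with
  | zero =>
    have ha1 : ((a:ℝ)+1) ≠ 0 := by positivity
    have hfa : ((a.factorial:ℝ)) ≠ 0 := by positivity
    have h := J_rec a 0
    simp only [Nat.cast_zero, zero_mul, zero_sub, Nat.factorial_zero, Nat.cast_one,
      mul_one, Nat.add_zero] at h ⊢
    refine mul_left_cancel₀ ha1 ?_
    rw [h, H_succ a, Nat.factorial_succ]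
    push_cast
    field_simp
    ring
  | succ b ih =>
    have ha1 : ((a:ℝ)+1) ≠ 0 := by positivity
    have hfa : ((a.factorial:ℝ)) ≠ 0 := by positivity
    have h := J_rec a (b+1)
    have e1 : (b+1) - 1 = b := rfl
    have e2 : (a+1)+b+1 = a+(b+1)+1 := by ring
    rw [e1, ih (a+1), e2, H_succ a] at h
    refine mul_left_cancel₀ ha1 ?_
    rw [h, Nat.factorial_succ a, Nat.factorial_succ b]
    have hfb : ((b.factorial:ℝ)) ≠ 0 := by positivity
    have hfab : (((a+(b+1)+1).factorial:ℝ)) ≠ 0 := by positivity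
    push_cast
    field_simp
    ring

private lemma J_val' (a b : ℕ) :
    ∫ u in (0:ℝ)..1, u^a*(1-u)^b*Real.log (1-u)
      = ((a.factorial * b.factorial : ℝ)/(a+b+1).factorial) * (H b - H (a+b+1)) := by
  have h := intervalIntegral.integral_comp_sub_left (a := (0:ℝ)) (b := (1:ℝ))
    (fun v : ℝ => v^b*(1-v)^a*Real.log v) 1
  norm_num at h
  have h2 : (∫ x in (0:ℝ)..1, (1-x)^b*x^a*Real.log (1-x))
      = ∫ x in (0:ℝ)..1, x^a*(1-x)^b*Real.log (1-x) := by
    apply intervalIntegral.integral_congr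
    intro x _
    ring
  rw [h2] at h
  rw [h, J_val a b]
  have e : b + a + 1 = a + b + 1 := by ring
  rw [e]
  ring

private lemma subst_lemma (A B : ℝ) (hB : 0 < B) (a b : ℕ) :
    (∫ t : ℝ, t * (1 / (1 + Real.exp (-(t - A) / B))) ^ a
        * (1 - 1 / (1 + Real.exp (-(t - A) / B))) ^ b
        * ((1 / B) * Real.exp (-(t - A) / B) / (1 + Real.exp (-(t - A) / B)) ^ 2))
      = ∫ u in (0:ℝ)..1, (A + B*(Real.log u - Real.log (1-u))) * (u^a*(1-u)^b) := by
  set g : ℝ → ℝ := fun t => t * (1 / (1 + Real.exp (-(t - A) / B))) ^ a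
        * (1 - 1 / (1 + Real.exp (-(t - A) / B))) ^ b
        * ((1 / B) * Real.exp (-(t - A) / B) / (1 + Real.exp (-(t - A) / B)) ^ 2) with hg
  set φ : ℝ → ℝ := fun u => A + B*(Real.log u - Real.log (1-u)) with hφ
  set φ' : ℝ → ℝ := fun u => B*(1/(u*(1-u))) with hφ'
  have hderiv : ∀ u ∈ Set.Ioo (0:ℝ) 1, HasDerivWithinAt φ (φ' u) (Set.Ioo 0 1) u := by
    intro u hu
    have hu0 : 0 < u := hu.1
    have h1u : 0 < 1 - u := by linarith [hu.2]
    have d1 : HasDerivAt Real.log u⁻¹ u := Real.hasDerivAt_log hu0.ne'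
    have d2 : HasDerivAt (fun v : ℝ => Real.log (1-v)) ((1-u)⁻¹ * (-1)) u := by
      exact (Real.hasDerivAt_log h1u.ne').comp u ((hasDerivAt_id u).const_sub 1)
    have d3 := ((d1.sub d2).const_mul B).const_add A
    have : HasDerivAt φ (B * (u⁻¹ - (1-u)⁻¹*(-1))) u := d3
    have heq : B * (u⁻¹ - (1-u)⁻¹*(-1)) = φ' u := by
      rw [hφ']
      field_simp
      ring
    rw [heq] at this
    exact this.hasDerivWithinAt
  have hinj : Set.InjOn φ (Set.Ioo (0:ℝ) 1) := by
    apply StrictMonoOn.injOn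
    intro x hx y hy hxy
    have l1 : Real.log x < Real.log y := Real.log_lt_log hx.1 hxy
    have l2 : Real.log (1-y) < Real.log (1-x) :=
      Real.log_lt_log (by linarith [hy.2]) (by linarith)
    have key : Real.log x - Real.log (1-x) < Real.log y - Real.log (1-y) := by linarith
    have := mul_lt_mul_of_pos_left key hB
    simp only [hφ]
    linarith
  have himg : φ '' Set.Ioo (0:ℝ) 1 = Set.univ := by
    ext x
    simp only [Set.mem_image, Set.mem_univ, iff_true]
    set E := Real.exp (-(x-A)/B) with hE
    have hEpos : 0 < E := Real.exp_pos _
    have h1E : 0 < 1 + E := by linarith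
    refine ⟨1/(1+E), ⟨by positivity, ?_⟩, ?_⟩
    · rw [div_lt_one h1E]; linarith
    · have hu : (1:ℝ) - 1/(1+E) = E/(1+E) := by field_simp; ring
      rw [hφ]
      simp only
      rw [hu, Real.log_div (one_ne_zero) h1E.ne', Real.log_div hEpos.ne' h1E.ne',
        Real.log_one, hE, Real.log_exp]
      field_simp
      ring
  have key := integral_image_eq_integral_abs_deriv_smul measurableSet_Ioo hderiv hinj g
  rw [himg, MeasureTheory.setIntegral_univ] at key
  rw [key]
  rw [intervalIntegral.integral_of_le zero_le_one, MeasureTheory.integral_Ioc_eq_integral_Ioo]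
  apply MeasureTheory.setIntegral_congr_fun measurableSet_Ioo
  intro u hu
  have hu0 : 0 < u := hu.1
  have h1u : 0 < 1 - u := by linarith [hu.2]
  have hexp : Real.exp (-(φ u - A)/B) = (1-u)/u := by
    rw [hφ]
    simp only [add_sub_cancel_left]
    rw [neg_div, mul_div_cancel_left₀ _ hB.ne', neg_sub, ← Real.log_div h1u.ne' hu0.ne']
    exact Real.exp_log (by positivity)
  simp only [hg, smul_eq_mul]
  rw [hexp, hφ']
  have habs : |B * (1/(u*(1-u)))| = B * (1/(u*(1-u))) := by
    rw [abs_of_pos]; positivity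
  rw [habs]
  have hden : 1 + (1-u)/u = 1/u := by field_simp; ring
  rw [hden]
  have h1 : (1:ℝ) / (1/u) = u := by field_simp
  rw [h1]
  have h2 : (1:ℝ) - u = 1 - u := rfl
  field_simp
  ring

private lemma split_lemma (A B : ℝ) (a b : ℕ) :
    (∫ u in (0:ℝ)..1, (A + B*(Real.log u - Real.log (1-u))) * (u^a*(1-u)^b))
      = A * (∫ u in (0:ℝ)..1, u^a*(1-u)^b)
        + B * (∫ u in (0:ℝ)..1, u^a*(1-u)^b*Real.log u)
        - B * (∫ u in (0:ℝ)..1, u^a*(1-u)^b*Real.log (1-u)) := by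
  have i1 : IntervalIntegrable (fun u : ℝ => u^a*(1-u)^b) volume 0 1 := by
    apply Continuous.intervalIntegrable; continuity
  have i2 := intLog a b
  have i3 : IntervalIntegrable (fun u : ℝ => u^a*(1-u)^b*Real.log (1-u)) volume 0 1 := by
    have := ((intLog b a).comp_sub_left 1).symm
    norm_num at this
    have he : (fun u : ℝ => u^a*(1-u)^b*Real.log (1-u))
        = fun x : ℝ => (1-x)^b*(1-(1-x))^a*Real.log (1-x) := by
      funext x; ring_nf
    rw [he]
    convert this using 2 with x
    ring
  have hcong : (∫ u in (0:ℝ)..1, (A + B*(Real.log u - Real.log (1-u))) * (u^a*(1-u)^b))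
      = ∫ u in (0:ℝ)..1, (A * (u^a*(1-u)^b)
          + (B * (u^a*(1-u)^b*Real.log u) - B * (u^a*(1-u)^b*Real.log (1-u)))) := by
    apply intervalIntegral.integral_congr
    intro x _
    ring
  rw [hcong, intervalIntegral.integral_add (i1.const_mul A)
      ((i2.const_mul B).sub (i3.const_mul B)),
    intervalIntegral.integral_sub (i2.const_mul B) (i3.const_mul B),
    intervalIntegral.integral_const_mul, intervalIntegral.integral_const_mul,
    intervalIntegral.integral_const_mul]
  ring

/-- Theorem 3: the expectation of the `i`-th order statistic of `N` i.i.d.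
`Logistic(A,B)` samples equals `B·(∑_{k=1}^{i−1} 1/k − ∑_{k=1}^{N−i} 1/k) + A`. -/
theorem logistic_order_statistic_expectation
    (A B : ℝ) (hB : 0 < B) (N i : ℕ) (hi1 : 1 ≤ i) (hiN : i ≤ N) :
    ((N.factorial : ℝ) / ((i - 1).factorial * (N - i).factorial))
        * ∫ t : ℝ, t * (1 / (1 + exp (-(t - A) / B))) ^ (i - 1)
            * (1 - 1 / (1 + exp (-(t - A) / B))) ^ (N - i)
            * ((1 / B) * exp (-(t - A) / B) / (1 + exp (-(t - A) / B)) ^ 2)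
      = B * ((∑ k ∈ Finset.Icc 1 (i - 1), (1 : ℝ) / k)
              - ∑ k ∈ Finset.Icc 1 (N - i), (1 : ℝ) / k) + A := by
  set a := i - 1 with ha
  set b := N - i with hb
  have hab : a + b + 1 = N := by omega
  rw [subst_lemma A B hB a b, split_lemma A B a b, beta_nat b a, J_val b a, J_val' a b, hab]
  rw [show (∑ k ∈ Finset.Icc 1 a, (1:ℝ)/k) = H a from rfl,
    show (∑ k ∈ Finset.Icc 1 b, (1:ℝ)/k) = H b from rfl]
  have h1 : (a.factorial:ℝ) ≠ 0 := by positivity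
  have h2 : (b.factorial:ℝ) ≠ 0 := by positivity
  have h3 : (N.factorial:ℝ) ≠ 0 := by positivity
  field_simp
  ring
end
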